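/- arXiv:q-alg/9505022 — 4 statements merged into one kernel-verified Lean document; each statement's English description precedes it below -/
import Mathlib

section
/- Let H be a Hopf algebra and V a vector space over F. Consider the tensor product H-module structure on H ⊗ V ⊗ H, where H ⊗ V is the free H-module on V (H acting on the left factor) and H carries the left H-action h · k = k S(h). Then the map i : H ⊗ V → H ⊗ V ⊗ H, h ⊗ v ↦ Σ_i h_{1i} ⊗ v ⊗ S(h_{2i}), is an H-module map (with respect to the tensor product H-action via Δ), and i is an isomorphism of H-modules onto its image H · V, the H-submodule generated by 1 ⊗ V ⊗ 1. In particular, H · V is a free H-module on V. -/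
open TensorProduct LinearMap

variable (F H V : Type*) [Field F] [Ring H] [HopfAlgebra F H] [AddCommGroup V] [Module F V]

/-- The map `i : H ⊗ V → H ⊗ V ⊗ H`, `h ⊗ v ↦ ∑ᵢ h₁ᵢ ⊗ v ⊗ S(h₂ᵢ)`. -/
noncomputable def iMap : H ⊗[F] V →ₗ[F] H ⊗[F] (V ⊗[F] H) :=
  (LinearMap.lTensor H
      ((TensorProduct.comm F H V).toLinearMap ∘ₗ
        LinearMap.rTensor V (HopfAlgebra.antipode (R := F) (A := H)))) ∘ₗ
    (TensorProduct.assoc F H H V).toLinearMap ∘ₗ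
    LinearMap.rTensor V (Coalgebra.comul (R := F) (A := H))

/-- The tensor-product `H`-action on `H ⊗ V ⊗ H`, where `H` acts on the first factor by
left multiplication, trivially on `V`, and on the last factor by `h · k = k S(h)`;
via `Δ`, `h` acts by `∑ᵢ (h₁ᵢ ⬝) ⊗ 1 ⊗ (⬝ S(h₂ᵢ))`. -/
noncomputable def act₂ : H →ₗ[F] (H ⊗[F] (V ⊗[F] H)) →ₗ[F] (H ⊗[F] (V ⊗[F] H)) :=
  ((TensorProduct.homTensorHomMap (RingHom.id F) H (V ⊗[F] H) H (V ⊗[F] H)) ∘ₗ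
      TensorProduct.map (LinearMap.mul F H)
        ((LinearMap.lTensorHom (R := F) (M := V) (N := H) (P := H)) ∘ₗ
          (LinearMap.mul F H).flip ∘ₗ (HopfAlgebra.antipode (R := F) (A := H)))) ∘ₗ
    Coalgebra.comul (R := F) (A := H)

section Aux
open Coalgebra HopfAlgebra

variable {H}

noncomputable def conv (f g : H ⊗[F] H →ₗ[F] H) : H ⊗[F] H →ₗ[F] H :=
  LinearMap.mul' F H ∘ₗ TensorProduct.map f g ∘ₗ
    (tensorTensorTensorComm F H H H H).toLinearMap ∘ₗ
    TensorProduct.map (Coalgebra.comul) (Coalgebra.comul)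

variable {F}

lemma sum_counit_smul_eq {a : H} {ι : Type*} (r : Coalgebra.Repr F a ι) :
    ∑ i ∈ r.index, Coalgebra.counit (R := F) (r.left i) • r.right i = a := by
  have h := congrArg (TensorProduct.lid F H) (Coalgebra.sum_counit_tmul_eq r)
  simp only [map_sum, lid_tmul, one_smul] at h
  exact h

lemma sum_smul_counit_eq {a : H} {ι : Type*} (r : Coalgebra.Repr F a ι) :
    ∑ i ∈ r.index, Coalgebra.counit (R := F) (r.right i) • r.left i = a := by
  have h := congrArg (TensorProduct.rid F H) (Coalgebra.sum_tmul_counit_eq r)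
  simp only [map_sum, rid_tmul, one_smul] at h
  exact h

lemma conv_tmul (f g : H ⊗[F] H →ₗ[F] H) (a b : H)
    {ι κ : Type*} (ra : Coalgebra.Repr F a ι) (rb : Coalgebra.Repr F b κ) :
    conv F f g (a ⊗ₜ b) =
      ∑ i ∈ ra.index, ∑ j ∈ rb.index,
        f (ra.left i ⊗ₜ rb.left j) * g (ra.right i ⊗ₜ rb.right j) := by
  simp only [conv, comp_apply, map_tmul, ← ra.eq, ← rb.eq, LinearEquiv.coe_coe]
  rw [Finset.sum_comm]
  simp [sum_tmul, tmul_sum, map_sum, Finset.mul_sum, Finset.sum_mul]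

/-- convolution unit -/
noncomputable def convUnit : H ⊗[F] H →ₗ[F] H :=
  Algebra.linearMap F H ∘ₗ LinearMap.mul' F F ∘ₗ
    TensorProduct.map (Coalgebra.counit) (Coalgebra.counit)

lemma convUnit_tmul (a b : H) :
    convUnit (F := F) (a ⊗ₜ b) =
      (Coalgebra.counit (R := F) a * Coalgebra.counit (R := F) b) • (1 : H) := by
  simp [convUnit, Algebra.smul_def]

lemma conv_unit_left (f : H ⊗[F] H →ₗ[F] H) : conv F convUnit f = f := by
  apply TensorProduct.ext'
  intro a b
  rw [conv_tmul _ _ _ _ (ℛ F a) (ℛ F b)]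
  conv_rhs => rw [← sum_counit_smul_eq (ℛ F a), ← sum_counit_smul_eq (ℛ F b),
    sum_tmul]
  rw [map_sum]
  refine Finset.sum_congr rfl fun i _ => ?_
  rw [tmul_sum, map_sum]
  refine Finset.sum_congr rfl fun j _ => ?_
  rw [convUnit_tmul, smul_mul_assoc, one_mul, tmul_smul, ← smul_tmul', map_smul, map_smul,
    smul_smul, mul_comm]

lemma conv_unit_right (f : H ⊗[F] H →ₗ[F] H) : conv F f convUnit = f := by
  apply TensorProduct.ext'
  intro a b
  rw [conv_tmul _ _ _ _ (ℛ F a) (ℛ F b)]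
  conv_rhs => rw [← sum_smul_counit_eq (ℛ F a), ← sum_smul_counit_eq (ℛ F b),
    sum_tmul]
  rw [map_sum]
  refine Finset.sum_congr rfl fun i _ => ?_
  rw [tmul_sum, map_sum]
  refine Finset.sum_congr rfl fun j _ => ?_
  rw [convUnit_tmul, mul_smul_comm, mul_one, tmul_smul, ← smul_tmul', map_smul, map_smul,
    smul_smul, mul_comm]

variable (F) in
/-- auxiliary 6-fold multiplication map -/
noncomputable def convAux (f g h : H ⊗[F] H →ₗ[F] H) :
    (H ⊗[F] (H ⊗[F] H)) ⊗[F] (H ⊗[F] (H ⊗[F] H)) →ₗ[F] H :=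
  LinearMap.mul' F H ∘ₗ LinearMap.lTensor H (LinearMap.mul' F H) ∘ₗ
    TensorProduct.map f (TensorProduct.map g h) ∘ₗ
    LinearMap.lTensor (H ⊗[F] H) (tensorTensorTensorComm F H H H H).toLinearMap ∘ₗ
    (tensorTensorTensorComm F H (H ⊗[F] H) H (H ⊗[F] H)).toLinearMap

lemma convAux_tmul (f g h : H ⊗[F] H →ₗ[F] H) (x y z x' y' z' : H) :
    convAux F f g h ((x ⊗ₜ (y ⊗ₜ z)) ⊗ₜ (x' ⊗ₜ (y' ⊗ₜ z'))) =
      f (x ⊗ₜ x') * (g (y ⊗ₜ y') * h (z ⊗ₜ z')) := by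
  simp [convAux]

lemma sum4_swap {α β γ δ M : Type*} [AddCommMonoid M] (s : Finset α) (t : Finset β)
    (u : α → Finset γ) (v : β → Finset δ) (G : α → γ → β → δ → M) :
    ∑ j ∈ t, ∑ l ∈ v j, ∑ i ∈ s, ∑ k ∈ u i, G i k j l =
      ∑ i ∈ s, ∑ k ∈ u i, ∑ j ∈ t, ∑ l ∈ v j, G i k j l := by
  calc ∑ j ∈ t, ∑ l ∈ v j, ∑ i ∈ s, ∑ k ∈ u i, G i k j l
      = ∑ j ∈ t, ∑ i ∈ s, ∑ l ∈ v j, ∑ k ∈ u i, G i k j l :=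
        Finset.sum_congr rfl fun j _ => Finset.sum_comm
    _ = ∑ i ∈ s, ∑ j ∈ t, ∑ l ∈ v j, ∑ k ∈ u i, G i k j l := Finset.sum_comm
    _ = ∑ i ∈ s, ∑ j ∈ t, ∑ k ∈ u i, ∑ l ∈ v j, G i k j l := by
        exact Finset.sum_congr rfl fun i _ => Finset.sum_congr rfl fun j _ =>
          Finset.sum_comm
    _ = ∑ i ∈ s, ∑ k ∈ u i, ∑ j ∈ t, ∑ l ∈ v j, G i k j l :=
        Finset.sum_congr rfl fun i _ => Finset.sum_comm

lemma conv_assoc (f g h : H ⊗[F] H →ₗ[F] H) :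
    conv F (conv F f g) h = conv F f (conv F g h) := by
  apply TensorProduct.ext'
  intro a b
  set ra := ℛ F a; set rb := ℛ F b
  set rla : (i : ra.ι) → Coalgebra.Repr F (ra.left i) (H × H) := fun i => ℛ F (ra.left i) with hrla
  set rra : (i : ra.ι) → Coalgebra.Repr F (ra.right i) (H × H) := fun i => ℛ F (ra.right i) with hrra
  set rlb : (j : rb.ι) → Coalgebra.Repr F (rb.left j) (H × H) := fun j => ℛ F (rb.left j) with hrlb
  set rrb : (j : rb.ι) → Coalgebra.Repr F (rb.right j) (H × H) := fun j => ℛ F (rb.right j) with hrrb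
  have hA := Coalgebra.sum_tmul_tmul_eq ra rla rra
  have hB := Coalgebra.sum_tmul_tmul_eq rb rlb rrb
  have lhs_eq : conv F (conv F f g) h (a ⊗ₜ b) =
      ∑ i ∈ ra.index, ∑ j ∈ rb.index, ∑ k ∈ (rla i).index, ∑ l ∈ (rlb j).index,
        (f ((rla i).left k ⊗ₜ (rlb j).left l) * g ((rla i).right k ⊗ₜ (rlb j).right l)) *
          h (ra.right i ⊗ₜ rb.right j) := by
    rw [conv_tmul _ _ _ _ ra rb]
    refine Finset.sum_congr rfl fun i _ => Finset.sum_congr rfl fun j _ => ?_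
    rw [conv_tmul _ _ _ _ (rla i) (rlb j), Finset.sum_mul]
    exact Finset.sum_congr rfl fun k _ => by rw [Finset.sum_mul]
  have rhs_eq : conv F f (conv F g h) (a ⊗ₜ b) =
      ∑ i ∈ ra.index, ∑ j ∈ rb.index, ∑ k ∈ (rra i).index, ∑ l ∈ (rrb j).index,
        f (ra.left i ⊗ₜ rb.left j) *
          (g ((rra i).left k ⊗ₜ (rrb j).left l) * h ((rra i).right k ⊗ₜ (rrb j).right l)) := by
    rw [conv_tmul _ _ _ _ ra rb]
    refine Finset.sum_congr rfl fun i _ => Finset.sum_congr rfl fun j _ => ?_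
    rw [conv_tmul _ _ _ _ (rra i) (rrb j), Finset.mul_sum]
    exact Finset.sum_congr rfl fun k _ => by rw [Finset.mul_sum]
  have key : convAux F f g h
      ((∑ i ∈ ra.index, ∑ k ∈ (rla i).index,
          (rla i).left k ⊗ₜ[F] ((rla i).right k ⊗ₜ[F] ra.right i)) ⊗ₜ
       (∑ j ∈ rb.index, ∑ l ∈ (rlb j).index,
          (rlb j).left l ⊗ₜ[F] ((rlb j).right l ⊗ₜ[F] rb.right j))) =
      convAux F f g h
      ((∑ i ∈ ra.index, ∑ k ∈ (rra i).index,
          ra.left i ⊗ₜ[F] ((rra i).left k ⊗ₜ[F] (rra i).right k)) ⊗ₜ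
       (∑ j ∈ rb.index, ∑ l ∈ (rrb j).index,
          rb.left j ⊗ₜ[F] ((rrb j).left l ⊗ₜ[F] (rrb j).right l))) := by
    rw [hA, hB]
  simp only [sum_tmul, tmul_sum, map_sum, convAux_tmul] at key
  rw [lhs_eq, rhs_eq]
  calc ∑ i ∈ ra.index, ∑ j ∈ rb.index, ∑ k ∈ (rla i).index, ∑ l ∈ (rlb j).index,
        (f ((rla i).left k ⊗ₜ (rlb j).left l) * g ((rla i).right k ⊗ₜ (rlb j).right l)) *
          h (ra.right i ⊗ₜ rb.right j)
      = ∑ i ∈ ra.index, ∑ k ∈ (rla i).index, ∑ j ∈ rb.index, ∑ l ∈ (rlb j).index,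
        f ((rla i).left k ⊗ₜ (rlb j).left l) * (g ((rla i).right k ⊗ₜ (rlb j).right l) *
          h (ra.right i ⊗ₜ rb.right j)) := by
        refine Finset.sum_congr rfl fun i _ => ?_
        rw [Finset.sum_comm]
        exact Finset.sum_congr rfl fun k _ => Finset.sum_congr rfl fun j _ =>
          Finset.sum_congr rfl fun l _ => mul_assoc _ _ _
    _ = ∑ j ∈ rb.index, ∑ l ∈ (rlb j).index, ∑ i ∈ ra.index, ∑ k ∈ (rla i).index,
        f ((rla i).left k ⊗ₜ (rlb j).left l) * (g ((rla i).right k ⊗ₜ (rlb j).right l) *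
          h (ra.right i ⊗ₜ rb.right j)) := (sum4_swap _ _ _ _ _).symm
    _ = ∑ j ∈ rb.index, ∑ l ∈ (rrb j).index, ∑ i ∈ ra.index, ∑ k ∈ (rra i).index,
        f (ra.left i ⊗ₜ rb.left j) * (g ((rra i).left k ⊗ₜ (rrb j).left l) *
          h ((rra i).right k ⊗ₜ (rrb j).right l)) := key
    _ = ∑ i ∈ ra.index, ∑ k ∈ (rra i).index, ∑ j ∈ rb.index, ∑ l ∈ (rrb j).index,
        f (ra.left i ⊗ₜ rb.left j) * (g ((rra i).left k ⊗ₜ (rrb j).left l) *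
          h ((rra i).right k ⊗ₜ (rrb j).right l)) := sum4_swap _ _ _ _ _
    _ = ∑ i ∈ ra.index, ∑ j ∈ rb.index, ∑ k ∈ (rra i).index, ∑ l ∈ (rrb j).index,
        f (ra.left i ⊗ₜ rb.left j) * (g ((rra i).left k ⊗ₜ (rrb j).left l) *
          h ((rra i).right k ⊗ₜ (rrb j).right l)) :=
        Finset.sum_congr rfl fun i _ => Finset.sum_comm

lemma comul_mul_eq (a b : H) :
    TensorProduct.map (LinearMap.mul' F H) (LinearMap.mul' F H)
      ((tensorTensorTensorComm F H H H H)
        (Coalgebra.comul (R := F) a ⊗ₜ Coalgebra.comul (R := F) b)) =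
      Coalgebra.comul (R := F) (a * b) := by
  rw [Bialgebra.comul_mul]
  rw [← (ℛ F a).eq, ← (ℛ F b).eq, Finset.sum_mul_sum]
  simp only [sum_tmul, tmul_sum, map_sum, LinearEquiv.coe_coe, tensorTensorTensorComm_tmul,
    map_tmul, mul'_apply, Algebra.TensorProduct.tmul_mul_tmul]
  rw [Finset.sum_comm]

lemma conv_antipode_mul' :
    conv F (HopfAlgebra.antipode (R := F) ∘ₗ LinearMap.mul' F H) (LinearMap.mul' F H) =
      convUnit := by
  apply TensorProduct.ext'
  intro a b
  have : TensorProduct.map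
        (HopfAlgebra.antipode (R := F) ∘ₗ LinearMap.mul' F H) (LinearMap.mul' F H) =
      LinearMap.rTensor H (HopfAlgebra.antipode (R := F)) ∘ₗ
        TensorProduct.map (LinearMap.mul' F H) (LinearMap.mul' F H) := by
    rw [LinearMap.rTensor, ← TensorProduct.map_comp, LinearMap.id_comp]
  rw [conv, comp_apply, comp_apply, comp_apply, map_tmul, LinearEquiv.coe_coe, this,
    comp_apply, comul_mul_eq]
  rw [convUnit_tmul, ← Bialgebra.counit_mul]
  simpa [Algebra.smul_def] using HopfAlgebra.mul_antipode_rTensor_comul_apply (R := F) (a * b)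

lemma conv_mul'_nu :
    conv F (LinearMap.mul' F H)
      (LinearMap.mul' F H ∘ₗ TensorProduct.map (HopfAlgebra.antipode (R := F))
        (HopfAlgebra.antipode (R := F)) ∘ₗ (TensorProduct.comm F H H).toLinearMap) =
      convUnit := by
  apply TensorProduct.ext'
  intro a b
  rw [conv_tmul _ _ _ _ (ℛ F a) (ℛ F b), convUnit_tmul]
  simp only [comp_apply, LinearEquiv.coe_coe, comm_tmul, map_tmul, mul'_apply]
  have step : ∀ i ∈ (ℛ F a).index,
      ∑ j ∈ (ℛ F b).index,
        ((ℛ F a).left i * (ℛ F b).left j) *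
          (HopfAlgebra.antipode (R := F) ((ℛ F b).right j) *
           HopfAlgebra.antipode (R := F) ((ℛ F a).right i)) =
      Coalgebra.counit (R := F) b •
        ((ℛ F a).left i * HopfAlgebra.antipode (R := F) ((ℛ F a).right i)) := by
    intro i _
    have : ∀ j ∈ (ℛ F b).index,
        ((ℛ F a).left i * (ℛ F b).left j) *
          (HopfAlgebra.antipode (R := F) ((ℛ F b).right j) *
           HopfAlgebra.antipode (R := F) ((ℛ F a).right i)) =
        (ℛ F a).left i *
          (((ℛ F b).left j * HopfAlgebra.antipode (R := F) ((ℛ F b).right j)) *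
            HopfAlgebra.antipode (R := F) ((ℛ F a).right i)) := by
      intro j _
      rw [mul_assoc, ← mul_assoc ((ℛ F b).left j)]
    rw [Finset.sum_congr rfl this, ← Finset.mul_sum, ← Finset.sum_mul,
      HopfAlgebra.sum_mul_antipode_eq_smul (ℛ F b), smul_mul_assoc, one_mul, mul_smul_comm]
  rw [Finset.sum_congr rfl step, ← Finset.smul_sum,
    HopfAlgebra.sum_mul_antipode_eq_smul (ℛ F a), smul_smul, mul_comm]

lemma antipode_mul_map :
    (HopfAlgebra.antipode (R := F) ∘ₗ LinearMap.mul' F H) =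
      LinearMap.mul' F H ∘ₗ TensorProduct.map (HopfAlgebra.antipode (R := F))
        (HopfAlgebra.antipode (R := F)) ∘ₗ (TensorProduct.comm F H H).toLinearMap := by
  calc HopfAlgebra.antipode (R := F) ∘ₗ LinearMap.mul' F H
      = conv F (HopfAlgebra.antipode (R := F) ∘ₗ LinearMap.mul' F H) convUnit :=
        (conv_unit_right _).symm
    _ = conv F (HopfAlgebra.antipode (R := F) ∘ₗ LinearMap.mul' F H)
          (conv F (LinearMap.mul' F H)
            (LinearMap.mul' F H ∘ₗ TensorProduct.map (HopfAlgebra.antipode (R := F))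
              (HopfAlgebra.antipode (R := F)) ∘ₗ (TensorProduct.comm F H H).toLinearMap)) := by
        rw [conv_mul'_nu]
    _ = conv F (conv F (HopfAlgebra.antipode (R := F) ∘ₗ LinearMap.mul' F H)
          (LinearMap.mul' F H))
          (LinearMap.mul' F H ∘ₗ TensorProduct.map (HopfAlgebra.antipode (R := F))
            (HopfAlgebra.antipode (R := F)) ∘ₗ (TensorProduct.comm F H H).toLinearMap) :=
        (conv_assoc _ _ _).symm
    _ = conv F convUnit
          (LinearMap.mul' F H ∘ₗ TensorProduct.map (HopfAlgebra.antipode (R := F))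
            (HopfAlgebra.antipode (R := F)) ∘ₗ (TensorProduct.comm F H H).toLinearMap) := by
        rw [conv_antipode_mul']
    _ = _ := conv_unit_left _

lemma antipode_mul (a b : H) :
    HopfAlgebra.antipode (R := F) (a * b) =
      HopfAlgebra.antipode (R := F) b * HopfAlgebra.antipode (R := F) a := by
  have := congrArg (fun φ : H ⊗[F] H →ₗ[F] H => φ (a ⊗ₜ b)) (antipode_mul_map (F := F) (H := H))
  simpa using this

lemma counit_antipode (a : H) :
    Coalgebra.counit (R := F) (HopfAlgebra.antipode (R := F) a) =
      Coalgebra.counit (R := F) a := by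
  have h1 := congrArg (Coalgebra.counit (R := F))
    (HopfAlgebra.sum_antipode_mul_eq_smul (ℛ F a))
  simp only [map_sum, Bialgebra.counit_mul, map_smul, Bialgebra.counit_one, smul_eq_mul,
    mul_one] at h1
  have h2 : HopfAlgebra.antipode (R := F) a =
      ∑ i ∈ (ℛ F a).index, Coalgebra.counit (R := F) ((ℛ F a).right i) •
        HopfAlgebra.antipode (R := F) ((ℛ F a).left i) := by
    conv_lhs => rw [← sum_smul_counit_eq (ℛ F a)]
    rw [map_sum]
    exact Finset.sum_congr rfl fun i _ => by rw [map_smul]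
  rw [h2, map_sum]
  rw [← h1]
  exact Finset.sum_congr rfl fun i _ => by rw [map_smul, smul_eq_mul, mul_comm]

variable (F) (H)

lemma iMap_tmul (a : H) (v : V) {ι : Type*} (r : Coalgebra.Repr F a ι) :
    iMap F H V (a ⊗ₜ v) = ∑ i ∈ r.index,
      r.left i ⊗ₜ (v ⊗ₜ HopfAlgebra.antipode (R := F) (r.right i)) := by
  have h1 : (LinearMap.rTensor V (Coalgebra.comul (R := F) (A := H))) (a ⊗ₜ v) =
      ∑ i ∈ r.index, (r.left i ⊗ₜ r.right i) ⊗ₜ v := by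
    rw [rTensor_tmul, ← r.eq, sum_tmul]
  simp only [iMap, comp_apply, h1, map_sum, LinearEquiv.coe_coe, assoc_tmul, lTensor_tmul,
    comp_apply, rTensor_tmul, comm_tmul]

lemma act₂_tmul (h : H) {ι : Type*} (r : Coalgebra.Repr F h ι) (b : H) (v : V) (c : H) :
    act₂ F H V h (b ⊗ₜ (v ⊗ₜ c)) = ∑ i ∈ r.index,
      (r.left i * b) ⊗ₜ (v ⊗ₜ (c * HopfAlgebra.antipode (R := F) (r.right i))) := by
  simp only [act₂, comp_apply, ← r.eq, map_sum, map_tmul, LinearMap.sum_apply,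
    homTensorHomMap_apply, mul_apply', coe_lTensorHom, lTensor_tmul, flip_apply]

lemma act₂_one_tmul (h : H) (v : V) :
    act₂ F H V h ((1 : H) ⊗ₜ (v ⊗ₜ (1 : H))) = iMap F H V (h ⊗ₜ v) := by
  rw [act₂_tmul F H V h (ℛ F h), iMap_tmul F H V h v (ℛ F h)]
  simp only [mul_one, one_mul]

lemma iMap_module_map (h : H) (x : H ⊗[F] V) :
    iMap F H V (LinearMap.rTensor V (LinearMap.mulLeft F h) x) = act₂ F H V h (iMap F H V x) := by
  induction x using TensorProduct.induction_on with
  | zero => simp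
  | add y z hy hz => simp only [map_add, hy, hz]
  | tmul a v =>
    rw [rTensor_tmul, mulLeft_apply]
    set rh := ℛ F h with hrh
    set ra := ℛ F a with hra
    have hrepr : ∑ p ∈ rh.index ×ˢ ra.index,
        (rh.left p.1 * ra.left p.2) ⊗ₜ[F] (rh.right p.1 * ra.right p.2) =
        Coalgebra.comul (R := F) (h * a) := by
      rw [Bialgebra.comul_mul, ← rh.eq, ← ra.eq, Finset.sum_mul_sum, Finset.sum_product]
      simp only [Algebra.TensorProduct.tmul_mul_tmul]
    rw [iMap_tmul F H V (h * a) v ⟨rh.index ×ˢ ra.index, _, _, hrepr⟩,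
      iMap_tmul F H V a v ra, map_sum]
    have expand : ∀ i, act₂ F H V h
        (ra.left i ⊗ₜ (v ⊗ₜ HopfAlgebra.antipode (R := F) (ra.right i))) =
        ∑ j ∈ rh.index, (rh.left j * ra.left i) ⊗ₜ
          (v ⊗ₜ (HopfAlgebra.antipode (R := F) (ra.right i) *
            HopfAlgebra.antipode (R := F) (rh.right j))) :=
      fun i => act₂_tmul F H V h rh _ v _
    rw [Finset.sum_congr rfl fun i _ => expand i, Finset.sum_product]
    rw [Finset.sum_comm]
    exact Finset.sum_congr rfl fun i _ => Finset.sum_congr rfl fun j _ => by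
      rw [_root_.antipode_mul]

/-- retraction of `iMap` -/
noncomputable def jMap : H ⊗[F] (V ⊗[F] H) →ₗ[F] H ⊗[F] V :=
  LinearMap.lTensor H ((TensorProduct.rid F V).toLinearMap ∘ₗ
    LinearMap.lTensor V (Coalgebra.counit (R := F) (A := H)))

lemma jMap_iMap (x : H ⊗[F] V) : jMap F H V (iMap F H V x) = x := by
  induction x using TensorProduct.induction_on with
  | zero => simp
  | add y z hy hz => simp only [map_add, hy, hz]
  | tmul a v =>
    rw [iMap_tmul F H V a v (ℛ F a), map_sum]
    have : ∀ i, jMap F H V (((ℛ F a).left i) ⊗ₜ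
        (v ⊗ₜ HopfAlgebra.antipode (R := F) ((ℛ F a).right i))) =
        (Coalgebra.counit (R := F) ((ℛ F a).right i) • (ℛ F a).left i) ⊗ₜ v := by
      intro i
      simp only [jMap, lTensor_tmul, comp_apply, LinearEquiv.coe_coe, rid_tmul,
        _root_.counit_antipode]
      rw [tmul_smul, smul_tmul']
    rw [Finset.sum_congr rfl fun i _ => this i, ← sum_tmul, sum_smul_counit_eq (ℛ F a)]

lemma iMap_injective : Function.Injective (iMap F H V) := by
  intro x y hxy
  have := congrArg (jMap F H V) hxy
  rwa [jMap_iMap, jMap_iMap] at this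

end Aux

/-- `i : h ⊗ v ↦ ∑ᵢ h₁ᵢ ⊗ v ⊗ S(h₂ᵢ)` is an `H`-module map from the free
`H`-module `H ⊗ V` (with `H` acting by left multiplication on the first factor) to
`H ⊗ V ⊗ H` with the tensor-product action `act₂`, and it is an isomorphism onto its image
`H · V`, the `H`-submodule generated by `1 ⊗ V ⊗ 1`.  In particular `H · V` is a free
`H`-module on `V`. -/

theorem iMap_module_map_injective_range :
    (∀ (h : H) (x : H ⊗[F] V),
      iMap F H V (LinearMap.rTensor V (LinearMap.mulLeft F h) x) =
        act₂ F H V h (iMap F H V x)) ∧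
    Function.Injective (iMap F H V) ∧
    LinearMap.range (iMap F H V) =
      Submodule.span F
        {y : H ⊗[F] (V ⊗[F] H) | ∃ (h : H) (v : V),
          y = act₂ F H V h ((1 : H) ⊗ₜ[F] (v ⊗ₜ[F] (1 : H)))} := by
  refine ⟨iMap_module_map F H V, iMap_injective F H V, ?_⟩
  have hset : {y : H ⊗[F] (V ⊗[F] H) | ∃ (h : H) (v : V),
      y = act₂ F H V h ((1 : H) ⊗ₜ[F] (v ⊗ₜ[F] (1 : H)))} =
      iMap F H V '' {t : H ⊗[F] V | ∃ m n, t = m ⊗ₜ n} := by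
    ext y
    constructor
    · rintro ⟨h, v, rfl⟩
      exact ⟨h ⊗ₜ v, ⟨h, v, rfl⟩, (act₂_one_tmul F H V h v).symm⟩
    · rintro ⟨t, ⟨m, n, rfl⟩, rfl⟩
      exact ⟨m, n, (act₂_one_tmul F H V m n).symm⟩
  rw [hset, LinearMap.range_eq_map, ← TensorProduct.span_tmul_eq_top F H V,
    Submodule.map_span]
  congr 1
  ext y
  simp only [Set.mem_image, Set.mem_setOf_eq]
  constructor
  · rintro ⟨t, ⟨m, n, rfl⟩, rfl⟩; exact ⟨m ⊗ₜ n, ⟨m, n, rfl⟩, rfl⟩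
  · rintro ⟨t, ⟨m, n, rfl⟩, rfl⟩; exact ⟨m ⊗ₜ n, ⟨m, n, rfl⟩, rfl⟩
end

section
/- Let 𝔤 be a Lie algebra and V a vector space over a field F, and let 𝔞 be the Lie algebra freely generated by 𝔤 and V (so 𝔤 ⊆ 𝔞 and V ⊆ 𝔞). Then the 𝔤-submodule U(𝔤)·V of 𝔞 generated by V under the adjoint action is isomorphic, as a 𝔤-module, to the free 𝔤-module U(𝔤) ⊗ V on V. -/
open TensorProduct

section OldInstances

attribute [local instance 100] LieRing.ofAssociativeRing

section SDP
variable {F L N : Type*} [Field F] [LieRing L] [LieAlgebra F L]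
  [AddCommGroup N] [Module F N] (ρ : L →ₗ⁅F⁆ Module.End F N)

/-- Semidirect product Lie ring structure on `L × N` with `N` abelian. -/
def sdpLieRing : LieRing (L × N) where
  bracket p q := (⁅p.1, q.1⁆, ρ p.1 q.2 - ρ q.1 p.2)
  add_lie p q r := by
    ext
    · exact add_lie _ _ _
    · simp only []
      simp [add_lie, map_add, LinearMap.add_apply]
      abel
  lie_add p q r := by
    ext
    · exact lie_add _ _ _
    · simp only []
      simp [lie_add, map_add, LinearMap.add_apply]
      abel
  lie_self p := by
    ext
    · exact lie_self _
    · simp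
  leibniz_lie p q r := by
    ext
    · exact leibniz_lie _ _ _
    · simp only []
      simp only [Prod.snd_add, LieHom.map_lie, Ring.lie_def, map_sub, LinearMap.sub_apply,
        Module.End.mul_apply]
      abel

def sdpLieAlgebra : @LieAlgebra F (L × N) _ (sdpLieRing ρ) :=
  letI := sdpLieRing ρ
  { (inferInstance : Module F (L × N)) with
    lie_smul := fun t p q => by
      ext
      · exact lie_smul _ _ _
      · show ρ p.1 (t • q.2) - ρ (t • q.1) p.2 = t • (ρ p.1 q.2 - ρ q.1 p.2)
        simp [smul_sub] }

end SDP

set_option synthInstance.maxHeartbeats 400000 in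
/-- Any subalgebra of the universal enveloping algebra containing the image of `ι`
is the whole algebra. -/
theorem uea_subalgebra_top {F 𝔤 : Type*} [Field F] [LieRing 𝔤] [LieAlgebra F 𝔤]
    (S : Subalgebra F (UniversalEnvelopingAlgebra F 𝔤))
    (hS : ∀ x, UniversalEnvelopingAlgebra.ι F x ∈ S) (u : UniversalEnvelopingAlgebra F 𝔤) :
    u ∈ S := by
  let f : 𝔤 →ₗ⁅F⁆ S :=
    { toFun := fun x => ⟨UniversalEnvelopingAlgebra.ι F x, hS x⟩
      map_add' := fun x y => Subtype.ext (by simp)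
      map_smul' := fun c x => Subtype.ext (by simp)
      map_lie' := fun {x y} => Subtype.ext (by
        show (UniversalEnvelopingAlgebra.ι F ⁅x, y⁆ : UniversalEnvelopingAlgebra F 𝔤) = _
        rw [LieHom.map_lie]
        rfl) }
  let g := UniversalEnvelopingAlgebra.lift F f
  have h : S.val.comp g = AlgHom.id F (UniversalEnvelopingAlgebra F 𝔤) := by
    apply UniversalEnvelopingAlgebra.hom_ext
    apply LieHom.ext
    intro x
    show S.val (g (UniversalEnvelopingAlgebra.ι F x)) = UniversalEnvelopingAlgebra.ι F x
    rw [UniversalEnvelopingAlgebra.lift_ι_apply]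
    rfl
  have : S.val (g u) = u := by rw [← AlgHom.comp_apply, h]; rfl
  rw [← this]
  exact (g u).2

set_option maxHeartbeats 1000000 in
set_option synthInstance.maxHeartbeats 1000000 in
theorem free_module_in_freely_generated_lie_algebra_aux
    (F : Type*) (𝔤 V 𝔞 : Type u) [Field F] [LieRing 𝔤] [LieAlgebra F 𝔤]
    [AddCommGroup V] [Module F V] [LieRing 𝔞] [LieAlgebra F 𝔞]
    (ι𝔤 : 𝔤 →ₗ⁅F⁆ 𝔞) (ιV : V →ₗ[F] 𝔞)
    (hUP : ∀ (K : Type u) (_ : LieRing K) (_ : LieAlgebra F K)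
        (f : 𝔤 →ₗ⁅F⁆ K) (g : V →ₗ[F] K),
      ∃! φ : 𝔞 →ₗ⁅F⁆ K, (∀ x, φ (ι𝔤 x) = f x) ∧ (∀ v, φ (ιV v) = g v))
    (W : Submodule F 𝔞)
    (hW : W = sInf {p : Submodule F 𝔞 |
      LinearMap.range ιV ≤ p ∧ ∀ (x : 𝔤), ∀ a ∈ p, ⁅ι𝔤 x, a⁆ ∈ p}) :
    ∃ φ : (UniversalEnvelopingAlgebra F 𝔤) ⊗[F] V →ₗ[F] 𝔞,
      Function.Injective φ ∧
      LinearMap.range φ = W ∧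
      (∀ v : V, φ ((1 : UniversalEnvelopingAlgebra F 𝔤) ⊗ₜ[F] v) = ιV v) ∧
      (∀ (x : 𝔤) (u : UniversalEnvelopingAlgebra F 𝔤) (v : V),
        φ ((UniversalEnvelopingAlgebra.ι F x * u) ⊗ₜ[F] v) = ⁅ι𝔤 x, φ (u ⊗ₜ[F] v)⁆) := by
  classical
  set U := UniversalEnvelopingAlgebra F 𝔤 with hU
  set ιU := UniversalEnvelopingAlgebra.ι F (L := 𝔤) with hιU
  -- the representation of 𝔤 on 𝔞 via ι𝔤 and ad
  let ρa : 𝔤 →ₗ⁅F⁆ Module.End F 𝔞 := (LieAlgebra.ad F 𝔞).comp ι𝔤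
  let α : U →ₐ[F] Module.End F 𝔞 := UniversalEnvelopingAlgebra.lift F ρa
  let b : U →ₗ[F] V →ₗ[F] 𝔞 :=
    { toFun := fun u => (α u) ∘ₗ ιV
      map_add' := fun u₁ u₂ => by ext v; simp
      map_smul' := fun c u₁ => by ext v; simp }
  let φ : U ⊗[F] V →ₗ[F] 𝔞 := TensorProduct.lift b
  have hφtmul : ∀ (u : U) (v : V), φ (u ⊗ₜ[F] v) = α u (ιV v) := fun u v => rfl
  have h1 : ∀ v : V, φ ((1 : U) ⊗ₜ[F] v) = ιV v := by
    intro v; rw [hφtmul, map_one]; rfl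
  have hmul : ∀ (x : 𝔤) (u : U) (v : V),
      φ ((ιU x * u) ⊗ₜ[F] v) = ⁅ι𝔤 x, φ (u ⊗ₜ[F] v)⁆ := by
    intro x u v
    rw [hφtmul, hφtmul, map_mul]
    have : α (ιU x) = ρa x := UniversalEnvelopingAlgebra.lift_ι_apply F ρa x
    rw [Module.End.mul_apply, this]
    rfl
  have hsmul : ∀ (x : 𝔤) (t : U ⊗[F] V), φ (ιU x • t) = ⁅ι𝔤 x, φ t⁆ := by
    intro x t
    induction t using TensorProduct.induction_on with
    | zero => simp
    | tmul u v => rw [smul_tmul', smul_eq_mul, hmul]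
    | add s t hs ht => rw [smul_add, map_add, map_add, lie_add, hs, ht]
  -- basic facts about W
  have hW1 : LinearMap.range ιV ≤ W := hW ▸ le_sInf fun p hp => hp.1
  have hW2 : ∀ (x : 𝔤) (a : 𝔞), a ∈ W → ⁅ι𝔤 x, a⁆ ∈ W := by
    intro x a ha
    rw [hW] at ha ⊢
    rw [Submodule.mem_sInf] at ha ⊢
    exact fun p hp => hp.2 x a (ha p hp)
  have claim1 : ∀ (u : U) (w : 𝔞), w ∈ W → α u w ∈ W := by
    intro u
    let S : Subalgebra F U :=
      { carrier := {u | ∀ w ∈ W, α u w ∈ W}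
        mul_mem' := by
          intro a c ha hc w hw
          rw [map_mul, Module.End.mul_apply]
          exact ha _ (hc _ hw)
        one_mem' := by intro w hw; rw [map_one]; exact hw
        add_mem' := by
          intro a c ha hc w hw
          rw [map_add, LinearMap.add_apply]
          exact W.add_mem (ha _ hw) (hc _ hw)
        algebraMap_mem' := by
          intro c w hw
          rw [AlgHom.commutes]
          show (algebraMap F (Module.End F 𝔞) c) w ∈ W
          rw [Module.algebraMap_end_apply]
          exact W.smul_mem c hw }
    have : u ∈ S := uea_subalgebra_top S (fun x w hw => by
      have : α (ιU x) = ρa x := UniversalEnvelopingAlgebra.lift_ι_apply F ρa x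
      rw [this]
      exact hW2 x w hw) u
    exact this
  have hrange : LinearMap.range φ = W := by
    apply le_antisymm
    · rintro _ ⟨t, rfl⟩
      induction t using TensorProduct.induction_on with
      | zero => simpa using W.zero_mem
      | tmul u v => rw [hφtmul]; exact claim1 u _ (hW1 ⟨v, rfl⟩)
      | add s t hs ht => rw [map_add]; exact W.add_mem hs ht
    · rw [hW]
      apply sInf_le
      constructor
      · rintro _ ⟨v, rfl⟩
        exact ⟨(1 : U) ⊗ₜ[F] v, h1 v⟩
      · rintro x _ ⟨t, rfl⟩
        exact ⟨ιU x • t, hsmul x t⟩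
  -- injectivity
  have hinj : Function.Injective φ := by
    by_cases hV : Subsingleton V
    · have ht0 : ∀ t : U ⊗[F] V, t = 0 := by
        intro t
        induction t using TensorProduct.induction_on with
        | zero => rfl
        | tmul u v => rw [Subsingleton.elim v 0, TensorProduct.tmul_zero]
        | add s t hs ht => rw [hs, ht, add_zero]
      intro s t _
      rw [ht0 s, ht0 t]
    · rw [not_subsingleton_iff_nontrivial] at hV
      obtain ⟨v₀, hv₀⟩ := exists_ne (0 : V)
      haveI : Small.{u} F :=
        small_of_injective (f := fun c : F => c • v₀) (smul_left_injective F hv₀)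
      haveI : Small.{u} (FreeAlgebra F 𝔤) := by
        have e := FreeAlgebra.equivMonoidAlgebraFreeMonoid (R := F) (X := 𝔤)
        haveI : Small.{u} (FreeMonoid 𝔤 →₀ F) :=
          small_of_injective (f := fun f : FreeMonoid 𝔤 →₀ F => ⇑f) DFunLike.coe_injective
        haveI : Small.{u} (MonoidAlgebra F (FreeMonoid 𝔤)) :=
          small_of_injective (MonoidAlgebra.coeffEquiv (R := F) (M := FreeMonoid 𝔤)).injective
        exact small_of_injective e.injective
      haveI : Small.{u} (TensorAlgebra F 𝔤) :=
        small_of_surjective (TensorAlgebra.ringCon F 𝔤).mk'_surjective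
      haveI : Small.{u} U :=
        small_of_surjective (UniversalEnvelopingAlgebra.ringCon F 𝔤).mk'_surjective
      haveI : Small.{u} (U ⊗[F] V) := by
        have hsurj : Function.Surjective
            (Finsupp.linearCombination F (fun p : U × V => p.1 ⊗ₜ[F] p.2)) := by
          rw [← LinearMap.range_eq_top, Finsupp.range_linearCombination]
          convert TensorProduct.span_tmul_eq_top F U V using 2
          · rfl
          ext t
          constructor
          · rintro ⟨⟨m, n⟩, rfl⟩; exact ⟨m, n, rfl⟩
          · rintro ⟨m, n, rfl⟩; exact ⟨(m, n), rfl⟩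
        haveI : Small.{u} ((U × V) →₀ F) :=
          small_of_injective (f := fun f : (U × V) →₀ F => ⇑f) DFunLike.coe_injective
        exact small_of_surjective hsurj
      -- the free module model in universe u
      let N := Shrink.{u} (U ⊗[F] V)
      let e : N ≃ₗ[F] U ⊗[F] V := Shrink.linearEquiv F (U ⊗[F] V)
      -- the representation of 𝔤 on N
      let ρM : 𝔤 →ₗ⁅F⁆ Module.End F (U ⊗[F] V) :=
        ((Algebra.lsmul F F (U ⊗[F] V) : U →ₐ[F] Module.End F (U ⊗[F] V)).toLieHom).comp ιU
      have hρM : ∀ (x : 𝔤) (t : U ⊗[F] V), ρM x t = ιU x • t := fun x t => rfl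
      let ρ : 𝔤 →ₗ⁅F⁆ Module.End F N :=
        { toFun := fun x => e.symm.conj (ρM x)
          map_add' := fun x y => by rw [map_add, map_add]
          map_smul' := fun c x => by rw [map_smul, map_smul]; rfl
          map_lie' := fun {x y} => by
            rw [LieHom.map_lie, Ring.lie_def, Ring.lie_def, map_sub,
              Module.End.mul_eq_comp, Module.End.mul_eq_comp, LinearEquiv.conj_comp,
              LinearEquiv.conj_comp, Module.End.mul_eq_comp, Module.End.mul_eq_comp] }
      have hρ : ∀ (x : 𝔤) (n : N), ρ x n = e.symm (ιU x • e n) := by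
        intro x n
        show e.symm.conj (ρM x) n = _
        rw [LinearEquiv.conj_apply_apply, LinearEquiv.symm_symm, hρM]
      letI instLR : LieRing (𝔤 × N) := sdpLieRing ρ
      letI instLA : LieAlgebra F (𝔤 × N) := sdpLieAlgebra ρ
      have hbr : ∀ p q : 𝔤 × N, ⁅p, q⁆ = (⁅p.1, q.1⁆, ρ p.1 q.2 - ρ q.1 p.2) :=
        fun p q => rfl
      let fK : 𝔤 →ₗ⁅F⁆ 𝔤 × N :=
        { toFun := fun x => (x, 0)
          map_add' := fun x y => Prod.ext rfl (add_zero _).symm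
          map_smul' := fun c x => Prod.ext rfl (smul_zero c).symm
          map_lie' := fun {x y} => by
            rw [hbr]
            ext <;> simp }
      let gK : V →ₗ[F] 𝔤 × N :=
        { toFun := fun v => (0, e.symm ((1 : U) ⊗ₜ[F] v))
          map_add' := fun v w => by ext <;> simp [TensorProduct.tmul_add]
          map_smul' := fun c v => by ext <;> simp [TensorProduct.tmul_smul] }
      obtain ⟨φh, ⟨hfh, hgh⟩, -⟩ := hUP (𝔤 × N) instLR instLA fK gK
      let σ : 𝔞 →ₗ[F] U ⊗[F] V :=
        e.toLinearMap ∘ₗ (LinearMap.snd F 𝔤 N) ∘ₗ φh.toLinearMap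
      have hσ : ∀ a : 𝔞, σ a = e ((φh a).2) := fun a => rfl
      let τ : U ⊗[F] V →ₗ[F] U ⊗[F] V := σ ∘ₗ φ
      have hτ0 : ∀ t, τ t = σ (φ t) := fun t => rfl
      have hτ1 : ∀ v : V, τ ((1 : U) ⊗ₜ[F] v) = (1 : U) ⊗ₜ[F] v := by
        intro v
        rw [hτ0, h1, hσ, hgh]
        exact e.apply_symm_apply _
      have hstep : ∀ (x : 𝔤) (t : U ⊗[F] V), τ (ιU x • t) = ιU x • τ t := by
        intro x t
        rw [hτ0, hsmul, hσ, LieHom.map_lie, hfh, hbr]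
        show e (ρ x ((φh (φ t)).2) - ρ ((φh (φ t)).1) 0) = _
        rw [map_zero, sub_zero, hρ, e.apply_symm_apply]
        rfl
      have claim2 : ∀ (a : U) (t : U ⊗[F] V), τ (a • t) = a • τ t := by
        intro a
        let S : Subalgebra F U :=
          { carrier := {a | ∀ t, τ (a • t) = a • τ t}
            mul_mem' := by
              intro a c ha hc t
              rw [mul_smul, ha, hc, mul_smul]
            one_mem' := by intro t; rw [one_smul, one_smul]
            add_mem' := by
              intro a c ha hc t
              rw [add_smul, add_smul, map_add, ha, hc]
            algebraMap_mem' := by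
              intro c t
              rw [algebraMap_smul, algebraMap_smul, map_smul] }
        exact uea_subalgebra_top S (fun x => hstep x) a
      have hτ : ∀ t, τ t = t := by
        intro t
        induction t using TensorProduct.induction_on with
        | zero => rw [map_zero]
        | tmul u v =>
          have h : u ⊗ₜ[F] v = u • ((1 : U) ⊗ₜ[F] v) := by
            rw [smul_tmul', smul_eq_mul, mul_one]
          rw [h, claim2, hτ1]
        | add s t hs ht => rw [map_add, hs, ht]
      intro s t h
      rw [← hτ s, ← hτ t, hτ0, hτ0, h]
  exact ⟨φ, hinj, hrange, h1, hmul⟩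

end OldInstances

/-- let `𝔞` be the Lie algebra freely generated by a Lie algebra `𝔤` and a
vector space `V` (characterized by its universal property).  Then the `𝔤`-submodule
`U(𝔤)·V` of `𝔞` generated by `V` under the adjoint action is isomorphic, as a
`𝔤`-module, to the free `𝔤`-module `U(𝔤) ⊗ V`. -/
theorem free_module_in_freely_generated_lie_algebra
    (F : Type*) (𝔤 V 𝔞 : Type u) [Field F] [LieRing 𝔤] [LieAlgebra F 𝔤]
    [AddCommGroup V] [Module F V] [LieRing 𝔞] [LieAlgebra F 𝔞]
    (ι𝔤 : 𝔤 →ₗ⁅F⁆ 𝔞) (ιV : V →ₗ[F] 𝔞)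
    (hUP : ∀ (K : Type u) (_ : LieRing K) (_ : LieAlgebra F K)
        (f : 𝔤 →ₗ⁅F⁆ K) (g : V →ₗ[F] K),
      ∃! φ : 𝔞 →ₗ⁅F⁆ K, (∀ x, φ (ι𝔤 x) = f x) ∧ (∀ v, φ (ιV v) = g v))
    (W : Submodule F 𝔞)
    (hW : W = sInf {p : Submodule F 𝔞 |
      LinearMap.range ιV ≤ p ∧ ∀ (x : 𝔤), ∀ a ∈ p, ⁅ι𝔤 x, a⁆ ∈ p}) :
    ∃ φ : (UniversalEnvelopingAlgebra F 𝔤) ⊗[F] V →ₗ[F] 𝔞,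
      Function.Injective φ ∧
      LinearMap.range φ = W ∧
      (∀ v : V, φ ((1 : UniversalEnvelopingAlgebra F 𝔤) ⊗ₜ[F] v) = ιV v) ∧
      (∀ (x : 𝔤) (u : UniversalEnvelopingAlgebra F 𝔤) (v : V),
        φ ((UniversalEnvelopingAlgebra.ι F x * u) ⊗ₜ[F] v) = ⁅ι𝔤 x, φ (u ⊗ₜ[F] v)⁆) := by
  
  exact free_module_in_freely_generated_lie_algebra_aux F 𝔤 V 𝔞 ι𝔤 ιV hUP W hW
end

section
/- Let V and W be vector spaces over a field F. Inside the free Lie algebra F(V ⊕ W), the F(W)-module T(W)·V generated by V (under the adjoint action, where T(W) = U(F(W))) is isomorphic, as a module over the free Lie algebra F(W), to the free F(W)-module T(W) ⊗ V on V. -/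
open TensorProduct

namespace TWVAux

variable (F V W : Type*) [Field F] [AddCommGroup V] [Module F V] [AddCommGroup W] [Module F W]

/-- `ψ u` is the "iterated adjoint action" of `u ∈ T(W)` on `T(V × W)`. -/
noncomputable def ψ : TensorAlgebra F W →ₐ[F] Module.End F (TensorAlgebra F (V × W)) :=
  TensorAlgebra.lift F
    ((LinearMap.mul F (TensorAlgebra F (V × W)) -
        (LinearMap.mul F (TensorAlgebra F (V × W))).flip) ∘ₗ
      (TensorAlgebra.ι F) ∘ₗ (LinearMap.inr F V W))

lemma ψ_ι (w : W) (c : TensorAlgebra F (V × W)) :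
    ψ F V W (TensorAlgebra.ι F w) c =
      TensorAlgebra.ι F ((LinearMap.inr F V W) w) * c -
        c * TensorAlgebra.ι F ((LinearMap.inr F V W) w) := by
  simp [ψ, TensorAlgebra.lift_ι_apply, LinearMap.sub_apply, LinearMap.mul_apply']

noncomputable def j : V →ₗ[F] TensorAlgebra F (V × W) :=
  (TensorAlgebra.ι F) ∘ₗ (LinearMap.inl F V W)

noncomputable def φ : (TensorAlgebra F W) ⊗[F] V →ₗ[F] TensorAlgebra F (V × W) :=
  TensorProduct.lift
    (((LinearMap.llcomp F V (TensorAlgebra F (V × W)) (TensorAlgebra F (V × W))).flip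
        (j F V W)) ∘ₗ (ψ F V W).toLinearMap)

lemma φ_tmul (u : TensorAlgebra F W) (v : V) :
    φ F V W (u ⊗ₜ[F] v) = ψ F V W u (j F V W v) := rfl

lemma φ_one (v : V) :
    φ F V W ((1 : TensorAlgebra F W) ⊗ₜ[F] v) =
      TensorAlgebra.ι F ((LinearMap.inl F V W) v) := by
  rw [φ_tmul, map_one]; rfl

lemma φ_mul (w : W) (u : TensorAlgebra F W) (v : V) :
    φ F V W ((TensorAlgebra.ι F w * u) ⊗ₜ[F] v) =
      TensorAlgebra.ι F ((LinearMap.inr F V W) w) * φ F V W (u ⊗ₜ[F] v) -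
        φ F V W (u ⊗ₜ[F] v) * TensorAlgebra.ι F ((LinearMap.inr F V W) w) := by
  rw [φ_tmul, map_mul, Module.End.mul_apply, ← φ_tmul, ψ_ι]

/-- Left-multiplication-type operator on `T(W) ⊗ V` for `w : W`. -/
noncomputable def Lop : W →ₗ[F] Module.End F (TensorAlgebra F W ⊗[F] V) :=
  (LinearMap.rTensorHom V) ∘ₗ (LinearMap.mul F (TensorAlgebra F W)) ∘ₗ (TensorAlgebra.ι F)

lemma Lop_eq (w : W) :
    Lop F V W w =
      LinearMap.rTensor V (LinearMap.mul F (TensorAlgebra F W) (TensorAlgebra.ι F w)) := rfl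

lemma Lop_apply (w : W) (u : TensorAlgebra F W) (v : V) :
    Lop F V W w (u ⊗ₜ[F] v) = (TensorAlgebra.ι F w * u) ⊗ₜ[F] v := by
  rw [Lop_eq, LinearMap.rTensor_tmul, LinearMap.mul_apply']

/-- generator action of `V × W` on `(T(W) ⊗ V) × F`. -/
noncomputable def g : (V × W) →ₗ[F] Module.End F ((TensorAlgebra F W ⊗[F] V) × F) :=
  ((LinearMap.llcomp F ((TensorAlgebra F W ⊗[F] V) × F) (TensorAlgebra F W ⊗[F] V)
        ((TensorAlgebra F W ⊗[F] V) × F) (LinearMap.inl F (TensorAlgebra F W ⊗[F] V) F)) ∘ₗ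
      (LinearMap.smulRightₗ (LinearMap.snd F (TensorAlgebra F W ⊗[F] V) F)) ∘ₗ
      ((TensorProduct.mk F (TensorAlgebra F W) V) 1) ∘ₗ
      (LinearMap.fst F V W)) +
  (((LinearMap.llcomp F ((TensorAlgebra F W ⊗[F] V) × F) (TensorAlgebra F W ⊗[F] V)
        ((TensorAlgebra F W ⊗[F] V) × F)).flip
        (LinearMap.fst F (TensorAlgebra F W ⊗[F] V) F)) ∘ₗ
      (LinearMap.llcomp F (TensorAlgebra F W ⊗[F] V) (TensorAlgebra F W ⊗[F] V)
        ((TensorAlgebra F W ⊗[F] V) × F) (LinearMap.inl F (TensorAlgebra F W ⊗[F] V) F)) ∘ₗ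
      (Lop F V W) ∘ₗ
      (LinearMap.snd F V W))

lemma g_apply (p : V × W) (xc : (TensorAlgebra F W ⊗[F] V) × F) :
    g F V W p xc =
      (xc.2 • ((1 : TensorAlgebra F W) ⊗ₜ[F] p.1) + Lop F V W p.2 xc.1, 0) := by
  simp only [g, LinearMap.add_apply, LinearMap.comp_apply, LinearMap.llcomp_apply,
    LinearMap.flip_apply, LinearMap.smulRightₗ_apply, LinearMap.fst_apply,
    LinearMap.snd_apply, LinearMap.inl_apply, TensorProduct.mk_apply,
    LinearMap.smulRight_apply, LinearMap.llcomp_apply]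
  simp [Prod.mk_add_mk]

noncomputable def Θ : TensorAlgebra F (V × W) →ₐ[F]
    Module.End F ((TensorAlgebra F W ⊗[F] V) × F) :=
  TensorAlgebra.lift F (g F V W)

noncomputable def G : TensorAlgebra F W →ₐ[F]
    Module.End F ((TensorAlgebra F W ⊗[F] V) × F) :=
  TensorAlgebra.lift F ((g F V W) ∘ₗ (LinearMap.inr F V W))

lemma key (u : TensorAlgebra F W) :
    ∀ c : TensorAlgebra F (V × W),
      Θ F V W (ψ F V W u c) ((0 : TensorAlgebra F W ⊗[F] V), (1 : F)) =
        G F V W u (Θ F V W c ((0 : TensorAlgebra F W ⊗[F] V), (1 : F))) := by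
  induction u using TensorAlgebra.induction with
  | algebraMap r =>
      intro c
      simp [Algebra.algebraMap_eq_smul_one]
  | ι w =>
      intro c
      rw [ψ_ι]
      simp only [map_sub, map_mul, LinearMap.sub_apply, Module.End.mul_apply]
      rw [Θ, G]
      simp only [TensorAlgebra.lift_ι_apply, LinearMap.comp_apply]
      have h0 : g F V W ((LinearMap.inr F V W) w)
          ((0 : TensorAlgebra F W ⊗[F] V), (1 : F)) = 0 := by
        simp [g_apply]
      rw [h0, map_zero, sub_zero]
  | mul u₁ u₂ h1 h2 =>
      intro c
      rw [map_mul, Module.End.mul_apply, h1, h2, map_mul, Module.End.mul_apply]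
  | add u₁ u₂ h1 h2 =>
      intro c
      simp [map_add, h1 c, h2 c]

lemma G_fst (u : TensorAlgebra F W) :
    ∀ x : TensorAlgebra F W ⊗[F] V,
      G F V W u (x, (0 : F)) =
        (LinearMap.rTensor V (LinearMap.mul F (TensorAlgebra F W) u) x, 0) := by
  induction u using TensorAlgebra.induction with
  | algebraMap r =>
      intro x
      have h1 : (LinearMap.mul F (TensorAlgebra F W)) (algebraMap F _ r) =
          r • LinearMap.id := by
        ext a
        simp [LinearMap.mul_apply', Algebra.smul_def]
      rw [h1, LinearMap.rTensor_smul, LinearMap.rTensor_id]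
      simp [Algebra.algebraMap_eq_smul_one, Prod.smul_mk]
  | ι w =>
      intro x
      rw [G]
      simp only [TensorAlgebra.lift_ι_apply, LinearMap.comp_apply]
      rw [g_apply]
      simp [Lop_eq]
  | mul u₁ u₂ h1 h2 =>
      intro x
      rw [map_mul, Module.End.mul_apply, h2, h1]
      have h3 : (LinearMap.mul F (TensorAlgebra F W)) (u₁ * u₂) =
          ((LinearMap.mul F (TensorAlgebra F W)) u₁) ∘ₗ
            ((LinearMap.mul F (TensorAlgebra F W)) u₂) := by
        ext a
        simp [LinearMap.mul_apply', mul_assoc]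
      rw [h3, LinearMap.rTensor_comp]
      rfl
  | add u₁ u₂ h1 h2 =>
      intro x
      simp [map_add, h1 x, h2 x, LinearMap.rTensor_add]

lemma retract (u : TensorAlgebra F W) (v : V) :
    (Θ F V W (φ F V W (u ⊗ₜ[F] v)) ((0 : TensorAlgebra F W ⊗[F] V), (1 : F))).1 =
      u ⊗ₜ[F] v := by
  rw [φ_tmul, key]
  have hj : Θ F V W (j F V W v) ((0 : TensorAlgebra F W ⊗[F] V), (1 : F)) =
      (((1 : TensorAlgebra F W) ⊗ₜ[F] v), 0) := by
    rw [Θ, j]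
    simp only [LinearMap.comp_apply, TensorAlgebra.lift_ι_apply]
    rw [g_apply]
    simp
  rw [hj, G_fst, LinearMap.rTensor_tmul, LinearMap.mul_apply', mul_one]

/-- The retraction. -/
noncomputable def r : TensorAlgebra F (V × W) →ₗ[F] TensorAlgebra F W ⊗[F] V :=
  (LinearMap.fst F (TensorAlgebra F W ⊗[F] V) F) ∘ₗ
    (LinearMap.applyₗ ((0 : TensorAlgebra F W ⊗[F] V), (1 : F))) ∘ₗ
    (Θ F V W).toLinearMap

lemma r_φ (t : TensorAlgebra F W ⊗[F] V) : r F V W (φ F V W t) = t := by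
  induction t using TensorProduct.induction_on with
  | zero => simp
  | tmul u v => exact retract F V W u v
  | add a b ha hb => simp [map_add, ha, hb]

lemma φ_inj : Function.Injective (φ F V W) := by
  intro a b h
  have := congrArg (r F V W) h
  rwa [r_φ, r_φ] at this

lemma ψ_mem (p : Submodule F (TensorAlgebra F (V × W)))
    (hbr : ∀ (w : W), ∀ c ∈ p,
      TensorAlgebra.ι F ((LinearMap.inr F V W) w) * c -
        c * TensorAlgebra.ι F ((LinearMap.inr F V W) w) ∈ p)
    (u : TensorAlgebra F W) : ∀ c ∈ p, ψ F V W u c ∈ p := by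
  induction u using TensorAlgebra.induction with
  | algebraMap r =>
      intro c hc
      simpa [Algebra.algebraMap_eq_smul_one] using p.smul_mem r hc
  | ι w =>
      intro c hc
      rw [ψ_ι]
      exact hbr w c hc
  | mul u₁ u₂ h1 h2 =>
      intro c hc
      rw [map_mul, Module.End.mul_apply]
      exact h1 _ (h2 c hc)
  | add u₁ u₂ h1 h2 =>
      intro c hc
      rw [map_add, LinearMap.add_apply]
      exact p.add_mem (h1 c hc) (h2 c hc)

lemma φ_bracket (w : W) (t : TensorAlgebra F W ⊗[F] V) :
    φ F V W (LinearMap.rTensor V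
        (LinearMap.mul F (TensorAlgebra F W) (TensorAlgebra.ι F w)) t) =
      TensorAlgebra.ι F ((LinearMap.inr F V W) w) * φ F V W t -
        φ F V W t * TensorAlgebra.ι F ((LinearMap.inr F V W) w) := by
  induction t using TensorProduct.induction_on with
  | zero => simp
  | tmul u v =>
      rw [LinearMap.rTensor_tmul, LinearMap.mul_apply', φ_mul]
  | add a b ha hb =>
      simp only [map_add]
      rw [ha, hb, mul_add, add_mul]
      abel

end TWVAux

attribute [local instance 100] LieRing.ofAssociativeRing

/-- inside the free Lie algebra `F(V ⊕ W)`, realized in the tensor algebra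
`T(V ⊕ W)` as the Lie subalgebra generated by `V ⊕ W`, the `F(W)`-submodule `T(W)·V`
generated by `V` under the adjoint action is a free `F(W)`-module (equivalently, free
`T(W)`-module) on `V`, i.e. it is the isomorphic image of `T(W) ⊗ V` under an injective
map intertwining left multiplication by `W` in `T(W)` with `ad` of `W`. -/
theorem TWV_free_module_over_TW
    (F V W : Type*) [Field F] [AddCommGroup V] [Module F V] [AddCommGroup W] [Module F W]
    (TWV : Submodule F (TensorAlgebra F (V × W)))
    (hTWV : TWV = sInf {p : Submodule F (TensorAlgebra F (V × W)) |
      LinearMap.range ((TensorAlgebra.ι F) ∘ₗ (LinearMap.inl F V W)) ≤ p ∧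
      ∀ (w : W), ∀ c ∈ p,
        TensorAlgebra.ι F ((LinearMap.inr F V W) w) * c -
          c * TensorAlgebra.ι F ((LinearMap.inr F V W) w) ∈ p}) :
    TWV ≤ LieSubalgebra.toSubmodule
        (LieSubalgebra.lieSpan F (TensorAlgebra F (V × W))
          (Set.range (TensorAlgebra.ι F))) ∧
    ∃ φ : (TensorAlgebra F W) ⊗[F] V →ₗ[F] TensorAlgebra F (V × W),
      Function.Injective φ ∧
      LinearMap.range φ = TWV ∧
      (∀ v : V, φ ((1 : TensorAlgebra F W) ⊗ₜ[F] v) =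
        TensorAlgebra.ι F ((LinearMap.inl F V W) v)) ∧
      (∀ (w : W) (u : TensorAlgebra F W) (v : V),
        φ ((TensorAlgebra.ι F w * u) ⊗ₜ[F] v) =
          TensorAlgebra.ι F ((LinearMap.inr F V W) w) * φ (u ⊗ₜ[F] v) -
            φ (u ⊗ₜ[F] v) * TensorAlgebra.ι F ((LinearMap.inr F V W) w)) := by
  have hmem : ∀ v : V, TensorAlgebra.ι F ((LinearMap.inl F V W) v) ∈ TWV := by
    intro v
    rw [hTWV, Submodule.mem_sInf]
    intro p hp
    exact hp.1 ⟨v, rfl⟩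
  have hbr : ∀ (w : W), ∀ c ∈ TWV,
      TensorAlgebra.ι F ((LinearMap.inr F V W) w) * c -
        c * TensorAlgebra.ι F ((LinearMap.inr F V W) w) ∈ TWV := by
    intro w c hc
    rw [hTWV, Submodule.mem_sInf] at hc ⊢
    intro p hp
    exact hp.2 w c (hc p hp)
  constructor
  · rw [hTWV]
    apply sInf_le
    constructor
    · rintro _ ⟨v, rfl⟩
      simp only [LieSubalgebra.mem_toSubmodule]
      exact LieSubalgebra.subset_lieSpan ⟨_, rfl⟩
    · intro w c hc
      simp only [LieSubalgebra.mem_toSubmodule] at hc ⊢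
      have h1 : TensorAlgebra.ι F ((LinearMap.inr F V W) w) ∈
          LieSubalgebra.lieSpan F (TensorAlgebra F (V × W))
            (Set.range (TensorAlgebra.ι F)) :=
        LieSubalgebra.subset_lieSpan ⟨_, rfl⟩
      have h2 := (LieSubalgebra.lieSpan F (TensorAlgebra F (V × W))
        (Set.range (TensorAlgebra.ι F))).lie_mem h1 hc
      rwa [Ring.lie_def] at h2
  · refine ⟨TWVAux.φ F V W, TWVAux.φ_inj F V W, ?_, TWVAux.φ_one F V W, TWVAux.φ_mul F V W⟩
    apply le_antisymm
    · rintro _ ⟨t, rfl⟩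
      induction t using TensorProduct.induction_on with
      | zero => simp only [map_zero]; exact TWV.zero_mem
      | tmul u v =>
          rw [TWVAux.φ_tmul]
          exact TWVAux.ψ_mem F V W TWV hbr u _ (hmem v)
      | add a b ha hb =>
          rw [map_add]
          exact TWV.add_mem ha hb
    · rw [hTWV]
      apply sInf_le
      constructor
      · rintro _ ⟨v, rfl⟩
        exact ⟨(1 : TensorAlgebra F W) ⊗ₜ[F] v, TWVAux.φ_one F V W v⟩
      · rintro w _ ⟨t, rfl⟩
        exact ⟨_, TWVAux.φ_bracket F V W w t⟩
end

section
/- Let V and W be vector spaces. Then the tensor algebra T(V ⊕ W) is isomorphic as an algebra to the smash product T(T(W)·V) # T(W), where T(W)·V is the T(W)-submodule of T(V ⊕ W) generated by V under the adjoint action of the Hopf algebra T(W), and T(T(W)·V) is the subalgebra of T(V ⊕ W) generated by T(W)·V (isomorphic to the tensor algebra on T(W)·V). -/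
open TensorProduct LinearMap

set_option maxHeartbeats 4000000
set_option synthInstance.maxHeartbeats 200000

namespace Smash16

section MulLeft
variable {R A : Type*} [CommSemiring R] [Semiring A] [Algebra R A]

lemma mulLeft_add' (a b : A) : mulLeft R (a + b) = mulLeft R a + mulLeft R b := by
  ext c; simp [add_mul]

lemma mulLeft_smul' (c : R) (a : A) : mulLeft R (c • a) = c • mulLeft R a := by
  ext b; simp [smul_mul_assoc]

end MulLeft

section Deriv
variable {F : Type*} [Field F] {M : Type*} [AddCommGroup M] [Module F M]
local notation "B" => TensorAlgebra F M

noncomputable def tsf (d : M →ₗ[F] M) : M →ₗ[F] TrivSqZeroExt B B :=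
  (TrivSqZeroExt.inlAlgHom F B B).toLinearMap ∘ₗ (TensorAlgebra.ι F) +
    ((TrivSqZeroExt.inrHom B B).restrictScalars F) ∘ₗ (TensorAlgebra.ι F) ∘ₗ d

noncomputable def tsD (d : M →ₗ[F] M) : B →ₗ[F] B :=
  ((TrivSqZeroExt.sndHom B B).restrictScalars F) ∘ₗ
    (TensorAlgebra.lift F (tsf d)).toLinearMap

lemma lift_tsf_fst (d : M →ₗ[F] M) (b : B) :
    (TensorAlgebra.lift F (tsf d) b).fst = b := by
  have h : (TrivSqZeroExt.fstHom F B B).comp (TensorAlgebra.lift F (tsf d)) =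
      AlgHom.id F B := by
    apply TensorAlgebra.hom_ext
    ext x
    simp [tsf]
  exact congrArg (fun f => f b) (congrArg (fun (g : B →ₐ[F] B) => ⇑g) h)

@[simp] lemma tsD_ι (d : M →ₗ[F] M) (x : M) :
    tsD d (TensorAlgebra.ι F x) = TensorAlgebra.ι F (d x) := by
  simp [tsD, tsf]

lemma tsD_mul (d : M →ₗ[F] M) (a b : B) :
    tsD d (a * b) = tsD d a * b + a * tsD d b := by
  simp only [tsD, LinearMap.comp_apply, LinearMap.coe_restrictScalars,
    AlgHom.toLinearMap_apply, map_mul, TrivSqZeroExt.sndHom_apply,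
    TrivSqZeroExt.snd_mul, lift_tsf_fst, smul_eq_mul, op_smul_eq_mul]
  rw [add_comm]

lemma tsD_one (d : M →ₗ[F] M) : tsD d 1 = 0 := by
  have := tsD_mul d 1 1
  simp only [mul_one, one_mul] at this
  exact (left_eq_add.mp this)

lemma deriv_unique {D : B →ₗ[F] B} {d : M →ₗ[F] M}
    (hmul : ∀ a b, D (a * b) = D a * b + a * D b)
    (hι : ∀ x, D (TensorAlgebra.ι F x) = TensorAlgebra.ι F (d x)) :
    D = tsD d := by
  have h1 : D 1 = 0 := by
    have := hmul 1 1
    simp only [mul_one, one_mul] at this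
    exact (left_eq_add.mp this)
  ext a
  induction a using TensorAlgebra.induction with
  | algebraMap r =>
      rw [Algebra.algebraMap_eq_smul_one]
      simp [map_smul, h1, tsD_one]
  | ι x => simp [hι]
  | mul a b ha hb => simp [hmul, tsD_mul, ha, hb]
  | add a b ha hb => simp [map_add, ha, hb]

lemma tsD_add (d d' : M →ₗ[F] M) : tsD (d + d') = tsD d + tsD d' := by
  refine (deriv_unique (fun a b => ?_) (fun x => ?_)).symm
  · simp only [LinearMap.add_apply, tsD_mul]; noncomm_ring
  · simp [map_add]

lemma tsD_smul (c : F) (d : M →ₗ[F] M) : tsD (c • d) = c • tsD d := by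
  refine (deriv_unique (fun a b => ?_) (fun x => ?_)).symm
  · simp only [LinearMap.smul_apply, tsD_mul, smul_add, smul_mul_assoc, mul_smul_comm]
  · simp

lemma tsD_zero : tsD (0 : M →ₗ[F] M) = 0 :=
  (deriv_unique (fun a b => by simp) (fun x => by simp)).symm

end Deriv

section Main

variable {F V W : Type*} [Field F] [AddCommGroup V] [Module F V] [AddCommGroup W] [Module F W]
variable (TWV : Submodule F (TensorAlgebra F (V × W)))

noncomputable def wE (w : W) : TensorAlgebra F (V × W) :=
  TensorAlgebra.ι F ((LinearMap.inr F V W) w)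

variable (hAd : ∀ (w : W), ∀ c ∈ TWV,
  TensorAlgebra.ι F ((LinearMap.inr F V W) w) * c -
    c * TensorAlgebra.ι F ((LinearMap.inr F V W) w) ∈ TWV)

noncomputable def dmap (w : W) : ↥TWV →ₗ[F] ↥TWV :=
  (mulLeft F (wE (F := F) (V := V) w) - mulRight F (wE (F := F) (V := V) w)).restrict
    (fun c hc => hAd w c hc)

@[simp] lemma dmap_coe (w : W) (x : ↥TWV) :
    (dmap TWV hAd w x : TensorAlgebra F (V × W)) =
      wE (F := F) (V := V) w * x - x * wE (F := F) (V := V) w := by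
  simp [dmap, LinearMap.restrict_apply]
  rfl

lemma dmap_add (w w' : W) :
    dmap TWV hAd (w + w') = dmap TWV hAd w + dmap TWV hAd w' := by
  ext x
  simp only [dmap_coe, LinearMap.add_apply, Submodule.coe_add, wE, map_add]
  noncomm_ring

lemma dmap_smul (c : F) (w : W) :
    dmap TWV hAd (c • w) = c • dmap TWV hAd w := by
  ext x
  simp only [dmap_coe, LinearMap.smul_apply, SetLike.val_smul, wE, map_smul]
  rw [smul_sub, smul_mul_assoc, mul_smul_comm]

lemma dmap_zero : dmap TWV hAd 0 = 0 := by
  ext x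
  simp [dmap_coe, wE, Prod.mk_zero_zero]

variable (hV : ∀ v : V, TensorAlgebra.ι F ((LinearMap.inl F V W) v) ∈ TWV)

/-- `V → TWV` -/
noncomputable def vhat : V →ₗ[F] ↥TWV :=
  ((TensorAlgebra.ι F) ∘ₗ (LinearMap.inl F V W)).codRestrict TWV hV

@[simp] lemma vhat_coe (v : V) :
    (vhat TWV hV v : TensorAlgebra F (V × W)) = TensorAlgebra.ι F ((LinearMap.inl F V W) v) :=
  rfl

/-- the generating operators for the representation of `T(V × W)` on `T(TWV) ⊗ T(W)` -/
noncomputable def Lgen :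
    (V × W) →ₗ[F] Module.End F ((TensorAlgebra F ↥TWV) ⊗[F] (TensorAlgebra F W)) where
  toFun p :=
    rTensor (TensorAlgebra F W) (mulLeft F (TensorAlgebra.ι F (vhat TWV hV p.1))) +
      rTensor (TensorAlgebra F W) (tsD (dmap TWV hAd p.2)) +
      lTensor (TensorAlgebra F ↥TWV) (mulLeft F (TensorAlgebra.ι F p.2))
  map_add' p q := by
    simp only [Prod.fst_add, Prod.snd_add, map_add, mulLeft_add', dmap_add, tsD_add,
      rTensor_add, lTensor_add]
    abel
  map_smul' c p := by
    simp only [Prod.smul_fst, Prod.smul_snd, map_smul, mulLeft_smul', dmap_smul, tsD_smul,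
      rTensor_smul, lTensor_smul, RingHom.id_apply]
    rw [smul_add, smul_add]

lemma Lgen_apply (p : V × W) :
    Lgen TWV hAd hV p =
      rTensor (TensorAlgebra F W) (mulLeft F (TensorAlgebra.ι F (vhat TWV hV p.1))) +
        rTensor (TensorAlgebra F W) (tsD (dmap TWV hAd p.2)) +
        lTensor (TensorAlgebra F ↥TWV) (mulLeft F (TensorAlgebra.ι F p.2)) := rfl

/-- the representation -/
noncomputable def ρrep :
    TensorAlgebra F (V × W) →ₐ[F]
      Module.End F ((TensorAlgebra F ↥TWV) ⊗[F] (TensorAlgebra F W)) :=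
  TensorAlgebra.lift F (Lgen TWV hAd hV)

lemma rho_ι (p : V × W) : ρrep TWV hAd hV (TensorAlgebra.ι F p) = Lgen TWV hAd hV p :=
  TensorAlgebra.lift_ι_apply _ _

lemma Lgen_inl (v : V) :
    Lgen TWV hAd hV ((LinearMap.inl F V W) v) =
      rTensor (TensorAlgebra F W) (mulLeft F (TensorAlgebra.ι F (vhat TWV hV v))) := by
  rw [Lgen_apply]
  have h0 : ((LinearMap.inl F V W) v).2 = (0 : W) := rfl
  have h1 : ((LinearMap.inl F V W) v).1 = v := rfl
  rw [h0, h1, dmap_zero, tsD_zero, map_zero]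
  simp [mulLeft_zero_eq_zero]

lemma Lgen_inr (w : W) :
    Lgen TWV hAd hV ((LinearMap.inr F V W) w) =
      rTensor (TensorAlgebra F W) (tsD (dmap TWV hAd w)) +
      lTensor (TensorAlgebra F ↥TWV) (mulLeft F (TensorAlgebra.ι F w)) := by
  rw [Lgen_apply]
  have h0 : ((LinearMap.inr F V W) w).1 = (0 : V) := rfl
  have h1 : ((LinearMap.inr F V W) w).2 = w := rfl
  rw [h0, h1, map_zero, map_zero, mulLeft_zero_eq_zero, rTensor_zero, zero_add]

/-- left multiplication by `ι x` on `T(TWV) ⊗ T(W)`, as a linear map in `x` -/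
noncomputable def gmap :
    ↥TWV →ₗ[F] Module.End F ((TensorAlgebra F ↥TWV) ⊗[F] (TensorAlgebra F W)) where
  toFun x := rTensor (TensorAlgebra F W) (mulLeft F (TensorAlgebra.ι F x))
  map_add' x y := by
    simp only [map_add, mulLeft_add', rTensor_add]
  map_smul' c x := by
    simp only [map_smul, mulLeft_smul', rTensor_smul, RingHom.id_apply]

@[simp] lemma gmap_apply (x : ↥TWV) :
    gmap TWV x = rTensor (TensorAlgebra F W) (mulLeft F (TensorAlgebra.ι F x)) := rfl

/-- key step: on elements of `TWV ⊆ T(V × W)`, the representation acts by left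
multiplication by the corresponding generator of `T(TWV)`. -/
lemma rho_coe
    (hmin : ∀ p : Submodule F (TensorAlgebra F (V × W)),
      (LinearMap.range ((TensorAlgebra.ι F) ∘ₗ (LinearMap.inl F V W)) ≤ p ∧
        ∀ (w : W), ∀ c ∈ p,
          TensorAlgebra.ι F ((LinearMap.inr F V W) w) * c -
            c * TensorAlgebra.ι F ((LinearMap.inr F V W) w) ∈ p) → TWV ≤ p)
    (x : ↥TWV) :
    ρrep TWV hAd hV (x : TensorAlgebra F (V × W)) = gmap TWV x := by
  set K : Submodule F ↥TWV :=
    LinearMap.eqLocus ((ρrep TWV hAd hV).toLinearMap ∘ₗ TWV.subtype) (gmap TWV) with hK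
  have hKmem : ∀ y : ↥TWV, y ∈ K ↔
      ρrep TWV hAd hV (y : TensorAlgebra F (V × W)) = gmap TWV y := by
    intro y
    rw [hK, LinearMap.mem_eqLocus, LinearMap.comp_apply]
    rfl
  have hQ : TWV ≤ K.map TWV.subtype := by
    refine hmin _ ⟨?_, ?_⟩
    · rintro a ⟨v, rfl⟩
      refine ⟨vhat TWV hV v, (hKmem _).2 ?_, rfl⟩
      have h : ((vhat TWV hV v : ↥TWV) : TensorAlgebra F (V × W)) =
          TensorAlgebra.ι F ((LinearMap.inl F V W) v) := rfl
      rw [h, rho_ι, Lgen_inl, gmap_apply]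
    · rintro w c ⟨x₀, hx₀, rfl⟩
      have hsub : ∀ y : ↥TWV, TWV.subtype y = (y : TensorAlgebra F (V × W)) := fun _ => rfl
      refine ⟨dmap TWV hAd w x₀, (hKmem _).2 ?_, by rw [hsub, dmap_coe]; rfl⟩
      have hx₀' := (hKmem _).1 hx₀
      have hw : ρrep TWV hAd hV (wE (F := F) (V := V) w) =
          rTensor (TensorAlgebra F W) (tsD (dmap TWV hAd w)) +
            lTensor (TensorAlgebra F ↥TWV) (mulLeft F (TensorAlgebra.ι F w)) := by
        rw [wE, rho_ι, Lgen_inr]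
      rw [gmap_apply, dmap_coe, map_sub, map_mul, map_mul, hw, hx₀', gmap_apply]
      have hder : tsD (dmap TWV hAd w) ∘ₗ mulLeft F (TensorAlgebra.ι F x₀) -
          mulLeft F (TensorAlgebra.ι F x₀) ∘ₗ tsD (dmap TWV hAd w) =
          mulLeft F (TensorAlgebra.ι F (dmap TWV hAd w x₀)) := by
        ext b
        simp only [LinearMap.sub_apply, LinearMap.comp_apply, mulLeft_apply, tsD_mul, tsD_ι]
        noncomm_ring
      simp only [Module.End.mul_eq_comp]
      rw [LinearMap.add_comp, LinearMap.comp_add, lTensor_comp_rTensor, rTensor_comp_lTensor,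
        ← rTensor_comp, ← rTensor_comp, ← hder, rTensor_sub]
      abel
  rcases hQ x.2 with ⟨y, hy, hyx⟩
  have hxy : y = x := Subtype.ext hyx
  subst hxy
  exact (hKmem _).1 hy

noncomputable def κmap : TensorAlgebra F ↥TWV →ₐ[F] TensorAlgebra F (V × W) :=
  TensorAlgebra.lift F TWV.subtype

@[simp] lemma κ_ι (x : ↥TWV) :
    κmap TWV (TensorAlgebra.ι F x) = (x : TensorAlgebra F (V × W)) :=
  TensorAlgebra.lift_ι_apply _ _

lemma rho_kappa
    (hmin : ∀ p : Submodule F (TensorAlgebra F (V × W)),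
      (LinearMap.range ((TensorAlgebra.ι F) ∘ₗ (LinearMap.inl F V W)) ≤ p ∧
        ∀ (w : W), ∀ c ∈ p,
          TensorAlgebra.ι F ((LinearMap.inr F V W) w) * c -
            c * TensorAlgebra.ι F ((LinearMap.inr F V W) w) ∈ p) → TWV ≤ p)
    (b : TensorAlgebra F ↥TWV) :
    ρrep TWV hAd hV (κmap TWV b) = rTensor (TensorAlgebra F W) (mulLeft F b) := by
  induction b using TensorAlgebra.induction with
  | algebraMap r =>
      rw [AlgHom.commutes, AlgHom.commutes, Module.algebraMap_end_eq_smul_id]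
      have h : mulLeft F (algebraMap F (TensorAlgebra F ↥TWV) r) =
          r • (LinearMap.id : TensorAlgebra F ↥TWV →ₗ[F] TensorAlgebra F ↥TWV) := by
        ext b; simp [Algebra.smul_def]
      rw [h, rTensor_smul, rTensor_id]
  | ι x =>
      rw [κ_ι, rho_coe TWV hAd hV hmin, gmap_apply]
  | mul a b ha hb =>
      rw [map_mul, map_mul, ha, hb, Module.End.mul_eq_comp, ← rTensor_comp, ← mulLeft_mul]
  | add a b ha hb =>
      rw [map_add, map_add, ha, hb, mulLeft_add', rTensor_add]

noncomputable def φmap : TensorAlgebra F W →ₐ[F] TensorAlgebra F (V × W) :=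
  TensorAlgebra.lift F ((TensorAlgebra.ι F) ∘ₗ (LinearMap.inr F V W))

@[simp] lemma φ_ι (w : W) :
    φmap (F := F) (V := V) (W := W) (TensorAlgebra.ι F w) =
      TensorAlgebra.ι F ((LinearMap.inr F V W) w) :=
  TensorAlgebra.lift_ι_apply _ _

lemma rho_phi (h h' : TensorAlgebra F W) :
    ρrep TWV hAd hV (φmap (F := F) (V := V) h) ((1 : TensorAlgebra F ↥TWV) ⊗ₜ[F] h') =
      (1 : TensorAlgebra F ↥TWV) ⊗ₜ[F] (h * h') := by
  induction h using TensorAlgebra.induction generalizing h' with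
  | algebraMap r =>
      rw [AlgHom.commutes, AlgHom.commutes, Module.algebraMap_end_apply,
        Algebra.algebraMap_eq_smul_one, smul_mul_assoc, one_mul, tmul_smul]
  | ι w =>
      rw [φ_ι, rho_ι, Lgen_inr]
      simp only [LinearMap.add_apply, rTensor_tmul, lTensor_tmul, mulLeft_apply]
      rw [tsD_one, zero_tmul, zero_add]
  | mul a b ha hb =>
      rw [map_mul, map_mul, Module.End.mul_eq_comp, LinearMap.comp_apply, hb, ha, mul_assoc]
  | add a b ha hb =>
      simp only [map_add, LinearMap.add_apply, ha, hb, add_mul, tmul_add]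

lemma kappa_tsD (w : W) (b : TensorAlgebra F ↥TWV) :
    κmap TWV (tsD (dmap TWV hAd w) b) =
      wE (F := F) (V := V) w * κmap TWV b - κmap TWV b * wE (F := F) (V := V) w := by
  induction b using TensorAlgebra.induction with
  | algebraMap r =>
      rw [Algebra.algebraMap_eq_smul_one, map_smul, tsD_one, smul_zero, map_zero, map_smul,
        map_one, smul_mul_assoc, mul_smul_comm, one_mul, mul_one, sub_self]
  | ι x =>
      rw [tsD_ι, κ_ι, κ_ι, dmap_coe]
  | mul a b ha hb =>
      rw [tsD_mul, map_add, map_mul, map_mul, map_mul, ha, hb]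
      noncomm_ring
  | add a b ha hb =>
      rw [map_add, map_add, map_add, ha, hb]
      noncomm_ring

/-- multiplication map `T(TWV) ⊗ T(W) → T(V × W)` -/
noncomputable def μmap : (TensorAlgebra F ↥TWV) ⊗[F] (TensorAlgebra F W) →ₗ[F]
    TensorAlgebra F (V × W) :=
  (LinearMap.mul' F (TensorAlgebra F (V × W))) ∘ₗ
    TensorProduct.map (κmap TWV).toLinearMap (φmap (F := F) (V := V)).toLinearMap

@[simp] lemma μmap_tmul (b : TensorAlgebra F ↥TWV) (h : TensorAlgebra F W) :
    μmap TWV (b ⊗ₜ h) = κmap TWV b * φmap (F := F) (V := V) h := by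
  simp [μmap]

lemma mu_rho (a : TensorAlgebra F (V × W)) :
    μmap TWV ∘ₗ (ρrep TWV hAd hV a) = mulLeft F a ∘ₗ μmap TWV := by
  induction a using TensorAlgebra.induction with
  | algebraMap r =>
      rw [AlgHom.commutes, Module.algebraMap_end_eq_smul_id]
      have h : mulLeft F (algebraMap F (TensorAlgebra F (V × W)) r) =
          r • (LinearMap.id : TensorAlgebra F (V × W) →ₗ[F] TensorAlgebra F (V × W)) := by
        ext b; simp [Algebra.smul_def]
      rw [h]
      ext s
      simp
  | ι p =>
      rw [rho_ι, Lgen_apply]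
      refine TensorProduct.ext' fun b h => ?_
      simp only [LinearMap.comp_apply, LinearMap.add_apply, rTensor_tmul, lTensor_tmul,
        mulLeft_apply, map_add, μmap_tmul, map_mul, κ_ι, φ_ι, vhat_coe, kappa_tsD]
      have hp : TensorAlgebra.ι F p =
          TensorAlgebra.ι F ((LinearMap.inl F V W) p.1) +
            TensorAlgebra.ι F ((LinearMap.inr F V W) p.2) := by
        rw [← map_add]
        congr 1
        exact Prod.ext (by simp) (by simp)
      rw [hp, wE]
      noncomm_ring
  | mul a b ha hb =>
      rw [map_mul, Module.End.mul_eq_comp, ← LinearMap.comp_assoc, ha, LinearMap.comp_assoc,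
        hb, ← LinearMap.comp_assoc, mulLeft_mul]
  | add a b ha hb =>
      simp only [map_add, mulLeft_add', LinearMap.comp_add, LinearMap.add_comp, ha, hb]

lemma nu_mu
    (hmin : ∀ p : Submodule F (TensorAlgebra F (V × W)),
      (LinearMap.range ((TensorAlgebra.ι F) ∘ₗ (LinearMap.inl F V W)) ≤ p ∧
        ∀ (w : W), ∀ c ∈ p,
          TensorAlgebra.ι F ((LinearMap.inr F V W) w) * c -
            c * TensorAlgebra.ι F ((LinearMap.inr F V W) w) ∈ p) → TWV ≤ p)
    (s : (TensorAlgebra F ↥TWV) ⊗[F] (TensorAlgebra F W)) :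
    ρrep TWV hAd hV (μmap TWV s) ((1 : TensorAlgebra F ↥TWV) ⊗ₜ[F] (1 : TensorAlgebra F W))
      = s := by
  have hT : (LinearMap.applyₗ
        ((1 : TensorAlgebra F ↥TWV) ⊗ₜ[F] (1 : TensorAlgebra F W))) ∘ₗ
        ((ρrep TWV hAd hV).toLinearMap ∘ₗ μmap TWV) = LinearMap.id := by
    refine TensorProduct.ext' fun b h => ?_
    simp only [LinearMap.comp_apply, AlgHom.toLinearMap_apply, μmap_tmul,
      LinearMap.applyₗ_apply_apply, LinearMap.id_apply]
    rw [map_mul, Module.End.mul_eq_comp, LinearMap.comp_apply, rho_phi, mul_one,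
      rho_kappa TWV hAd hV hmin, rTensor_tmul, mulLeft_apply, mul_one]
  exact DFunLike.congr_fun hT s

lemma mu_one :
    μmap TWV ((1 : TensorAlgebra F ↥TWV) ⊗ₜ[F] (1 : TensorAlgebra F W)) = 1 := by
  rw [μmap_tmul, map_one, map_one, one_mul]

include hAd hV in
lemma mu_bij
    (hmin : ∀ p : Submodule F (TensorAlgebra F (V × W)),
      (LinearMap.range ((TensorAlgebra.ι F) ∘ₗ (LinearMap.inl F V W)) ≤ p ∧
        ∀ (w : W), ∀ c ∈ p,
          TensorAlgebra.ι F ((LinearMap.inr F V W) w) * c -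
            c * TensorAlgebra.ι F ((LinearMap.inr F V W) w) ∈ p) → TWV ≤ p) :
    Function.Bijective (μmap TWV) := by
  constructor
  · intro s t hst
    have hs := nu_mu TWV hAd hV hmin s
    have ht := nu_mu TWV hAd hV hmin t
    rw [← hs, ← ht, hst]
  · intro a
    refine ⟨ρrep TWV hAd hV a
      ((1 : TensorAlgebra F ↥TWV) ⊗ₜ[F] (1 : TensorAlgebra F W)), ?_⟩
    have := DFunLike.congr_fun (mu_rho TWV hAd hV a)
      ((1 : TensorAlgebra F ↥TWV) ⊗ₜ[F] (1 : TensorAlgebra F W))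
    simp only [LinearMap.comp_apply] at this
    rw [this, mu_one, mulLeft_apply, mul_one]

include hAd hV in
lemma kappa_inj
    (hmin : ∀ p : Submodule F (TensorAlgebra F (V × W)),
      (LinearMap.range ((TensorAlgebra.ι F) ∘ₗ (LinearMap.inl F V W)) ≤ p ∧
        ∀ (w : W), ∀ c ∈ p,
          TensorAlgebra.ι F ((LinearMap.inr F V W) w) * c -
            c * TensorAlgebra.ι F ((LinearMap.inr F V W) w) ∈ p) → TWV ≤ p) :
    Function.Injective (κmap TWV) := by
  have hbase : ∀ b : TensorAlgebra F ↥TWV,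
      ρrep TWV hAd hV (κmap TWV b)
        ((1 : TensorAlgebra F ↥TWV) ⊗ₜ[F] (1 : TensorAlgebra F W)) =
        b ⊗ₜ[F] (1 : TensorAlgebra F W) := by
    intro b
    rw [rho_kappa TWV hAd hV hmin, rTensor_tmul, mulLeft_apply, mul_one]
  intro b b' hbb
  have h1 : b ⊗ₜ[F] (1 : TensorAlgebra F W) = b' ⊗ₜ[F] (1 : TensorAlgebra F W) := by
    rw [← hbase b, ← hbase b', hbb]
  have hctr := congrArg ((TensorProduct.rid F (TensorAlgebra F ↥TWV)).toLinearMap ∘ₗ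
      lTensor (TensorAlgebra F ↥TWV)
        (TensorAlgebra.lift F (0 : W →ₗ[F] F)).toLinearMap) h1
  simpa [lTensor_tmul] using hctr

lemma kappa_range :
    (κmap TWV).range = Algebra.adjoin F (TWV : Set (TensorAlgebra F (V × W))) := by
  have key : ∀ b : TensorAlgebra F ↥TWV,
      κmap TWV b ∈ Algebra.adjoin F (TWV : Set (TensorAlgebra F (V × W))) := by
    intro b
    induction b using TensorAlgebra.induction with
    | algebraMap r => rw [AlgHom.commutes]; exact Subalgebra.algebraMap_mem _ r
    | ι x => rw [κ_ι]; exact Algebra.subset_adjoin x.2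
    | mul a b ha hb => rw [map_mul]; exact mul_mem ha hb
    | add a b ha hb => rw [map_add]; exact add_mem ha hb
  apply le_antisymm
  · rintro _ ⟨b, rfl⟩
    exact key b
  · rw [Algebra.adjoin_le_iff]
    intro x hx
    exact ⟨TensorAlgebra.ι F (⟨x, hx⟩ : ↥TWV), κ_ι TWV _⟩

end Main

end Smash16

open Smash16 in
/-- the tensor algebra `T(V ⊕ W)` is the smash product
`T(T(W)·V) # T(W)`: writing `TWV = T(W)·V` for the `T(W)`-submodule of `T(V ⊕ W)`
generated by `V` under the adjoint action, the subalgebra generated by `TWV` is a copy of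
the tensor algebra on `TWV`, it is stable under the adjoint action of `T(W)`, the
canonical map `T(W) → T(V ⊕ W)` is injective, and multiplication induces a linear
isomorphism `T(TWV) ⊗ T(W) ≅ T(V ⊕ W)`. -/
theorem tensor_algebra_smash_decomposition
    (F V W : Type*) [Field F] [AddCommGroup V] [Module F V] [AddCommGroup W] [Module F W]
    (TWV : Submodule F (TensorAlgebra F (V × W)))
    (hTWV : TWV = sInf {p : Submodule F (TensorAlgebra F (V × W)) |
      LinearMap.range ((TensorAlgebra.ι F) ∘ₗ (LinearMap.inl F V W)) ≤ p ∧
      ∀ (w : W), ∀ c ∈ p,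
        TensorAlgebra.ι F ((LinearMap.inr F V W) w) * c -
          c * TensorAlgebra.ι F ((LinearMap.inr F V W) w) ∈ p})
    (AT : Subalgebra F (TensorAlgebra F (V × W)))
    (hAT : AT = Algebra.adjoin F (TWV : Set (TensorAlgebra F (V × W))))
    (φW : TensorAlgebra F W →ₐ[F] TensorAlgebra F (V × W))
    (hφW : φW = TensorAlgebra.lift F ((TensorAlgebra.ι F) ∘ₗ (LinearMap.inr F V W))) :
    (Function.Injective (TensorAlgebra.lift F TWV.subtype) ∧
      (TensorAlgebra.lift F TWV.subtype).range = AT) ∧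
    (∀ (w : W), ∀ a ∈ AT,
      TensorAlgebra.ι F ((LinearMap.inr F V W) w) * a -
        a * TensorAlgebra.ι F ((LinearMap.inr F V W) w) ∈ AT) ∧
    Function.Injective φW ∧
    Function.Bijective
      ((LinearMap.mul' F (TensorAlgebra F (V × W))) ∘ₗ
        TensorProduct.map (Subalgebra.toSubmodule AT).subtype φW.toLinearMap) := by
  subst hAT hφW
  have hAd : ∀ (w : W), ∀ c ∈ TWV,
      TensorAlgebra.ι F ((LinearMap.inr F V W) w) * c -
        c * TensorAlgebra.ι F ((LinearMap.inr F V W) w) ∈ TWV := by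
    rw [hTWV]
    intro w c hc
    rw [Submodule.mem_sInf] at hc ⊢
    intro p hp
    exact hp.2 w c (hc p hp)
  have hV : ∀ v : V, TensorAlgebra.ι F ((LinearMap.inl F V W) v) ∈ TWV := by
    rw [hTWV]
    intro v
    rw [Submodule.mem_sInf]
    intro p hp
    exact hp.1 ⟨v, rfl⟩
  have hmin : ∀ p : Submodule F (TensorAlgebra F (V × W)),
      (LinearMap.range ((TensorAlgebra.ι F) ∘ₗ (LinearMap.inl F V W)) ≤ p ∧
        ∀ (w : W), ∀ c ∈ p,
          TensorAlgebra.ι F ((LinearMap.inr F V W) w) * c -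
            c * TensorAlgebra.ι F ((LinearMap.inr F V W) w) ∈ p) → TWV ≤ p := by
    intro p hp
    rw [hTWV]
    exact sInf_le hp
  refine ⟨⟨kappa_inj TWV hAd hV hmin, kappa_range TWV⟩, ?_, ?_, ?_⟩
  · -- adjoint stability of the adjoin
    intro w a ha
    induction ha using Algebra.adjoin_induction with
    | mem x hx => exact Algebra.subset_adjoin (hAd w x hx)
    | algebraMap r =>
        have h : TensorAlgebra.ι F ((LinearMap.inr F V W) w) *
            algebraMap F (TensorAlgebra F (V × W)) r -
            algebraMap F (TensorAlgebra F (V × W)) r *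
            TensorAlgebra.ι F ((LinearMap.inr F V W) w) = 0 := by
          rw [Algebra.commutes, sub_self]
        rw [h]
        exact zero_mem _
    | add x y hx hy hpx hpy =>
        have h : TensorAlgebra.ι F ((LinearMap.inr F V W) w) * (x + y) -
            (x + y) * TensorAlgebra.ι F ((LinearMap.inr F V W) w) =
            (TensorAlgebra.ι F ((LinearMap.inr F V W) w) * x -
              x * TensorAlgebra.ι F ((LinearMap.inr F V W) w)) +
            (TensorAlgebra.ι F ((LinearMap.inr F V W) w) * y -
              y * TensorAlgebra.ι F ((LinearMap.inr F V W) w)) := by noncomm_ring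
        rw [h]
        exact add_mem hpx hpy
    | mul x y hx hy hpx hpy =>
        have h : TensorAlgebra.ι F ((LinearMap.inr F V W) w) * (x * y) -
            (x * y) * TensorAlgebra.ι F ((LinearMap.inr F V W) w) =
            (TensorAlgebra.ι F ((LinearMap.inr F V W) w) * x -
              x * TensorAlgebra.ι F ((LinearMap.inr F V W) w)) * y +
            x * (TensorAlgebra.ι F ((LinearMap.inr F V W) w) * y -
              y * TensorAlgebra.ι F ((LinearMap.inr F V W) w)) := by noncomm_ring
        rw [h]
        exact add_mem (mul_mem hpx hy) (mul_mem hx hpy)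
  · -- injectivity of φW
    have hcomp : (TensorAlgebra.lift F
          ((TensorAlgebra.ι F (M := W)) ∘ₗ (LinearMap.snd F V W))).comp
          (TensorAlgebra.lift F ((TensorAlgebra.ι F) ∘ₗ (LinearMap.inr F V W))) =
        AlgHom.id F (TensorAlgebra F W) := by
      apply TensorAlgebra.hom_ext
      ext w
      simp [TensorAlgebra.lift_ι_apply]
    intro x y hxy
    have hx := DFunLike.congr_fun hcomp x
    have hy := DFunLike.congr_fun hcomp y
    simp only [AlgHom.coe_comp, Function.comp_apply, AlgHom.coe_id, id_eq] at hx hy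
    rw [← hx, ← hy, hxy]
  · -- bijectivity of the multiplication map
    have hmem : ∀ b : TensorAlgebra F ↥TWV, κmap TWV b ∈
        Subalgebra.toSubmodule (Algebra.adjoin F (TWV : Set (TensorAlgebra F (V × W)))) := by
      intro b
      have hb : κmap TWV b ∈ (κmap TWV).range := ⟨b, rfl⟩
      rw [kappa_range TWV] at hb
      exact (Subalgebra.mem_toSubmodule _).2 hb
    let e : TensorAlgebra F ↥TWV →ₗ[F]
        ↥(Subalgebra.toSubmodule (Algebra.adjoin F (TWV : Set (TensorAlgebra F (V × W))))) :=
      (κmap TWV).toLinearMap.codRestrict _ hmem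
    have hebij : Function.Bijective e := by
      constructor
      · intro b b' hbb
        apply kappa_inj TWV hAd hV hmin
        exact congrArg Subtype.val hbb
      · rintro ⟨y, hy⟩
        have hy' : y ∈ (κmap TWV).range := by
          rw [kappa_range TWV]
          exact (Subalgebra.mem_toSubmodule _).1 hy
        obtain ⟨b, rfl⟩ := hy'
        exact ⟨b, rfl⟩
    let η := LinearEquiv.ofBijective e hebij
    let ηt := TensorProduct.congr η (LinearEquiv.refl F (TensorAlgebra F W))
    set m := (LinearMap.mul' F (TensorAlgebra F (V × W))) ∘ₗ
        TensorProduct.map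
          (Subalgebra.toSubmodule (Algebra.adjoin F (TWV : Set (TensorAlgebra F (V × W))))).subtype
          (TensorAlgebra.lift F ((TensorAlgebra.ι F) ∘ₗ (LinearMap.inr F V W))).toLinearMap
      with hm
    have hfac : m ∘ₗ (ηt : TensorAlgebra F ↥TWV ⊗[F] TensorAlgebra F W →ₗ[F]
        ↥(Subalgebra.toSubmodule (Algebra.adjoin F (TWV : Set (TensorAlgebra F (V × W)))))
          ⊗[F] TensorAlgebra F W) = μmap TWV := by
      refine TensorProduct.ext' fun b h => ?_
      simp only [hm, ηt, η, e, LinearMap.comp_apply, LinearEquiv.coe_coe,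
        TensorProduct.congr_tmul, LinearEquiv.refl_apply, TensorProduct.map_tmul,
        LinearMap.mul'_apply, μmap_tmul, LinearEquiv.ofBijective_apply,
        Submodule.subtype_apply, LinearMap.codRestrict_apply, AlgHom.toLinearMap_apply]
      rfl
    have hcoe : ⇑m = ⇑(μmap TWV) ∘ ⇑ηt.symm := by
      funext s
      have h2 := DFunLike.congr_fun hfac (ηt.symm s)
      simp only [LinearMap.comp_apply, LinearEquiv.coe_coe, LinearEquiv.apply_symm_apply]
        at h2
      simpa using h2
    rw [hcoe]
    exact (mu_bij TWV hAd hV hmin).comp ηt.symm.bijective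
end
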